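/- arXiv:1611.06280 — 4 statements merged into one kernel-verified Lean document; each statement's English description precedes it below -/
import Mathlib

section
/- Fix d ≥ 1 and multi-indices k, n ∈ ℕ₀^d, and let a, b ∈ ℝ. Then ∑_{l ∈ ℕ₀^d, l_i ≤ n_i for all i} (∏_{i=1}^d (l_i)_{k_i}) · a^{(|l|)} · b^{(|n|-|l|)} · ∏_{i=1}^d C(n_i, l_i) = a^{(|k|)} · (∏_{i=1}^d (n_i)_{k_i}) · (a+b+|k|)^{(|n|-|k|)}, where |l| := ∑_{i=1}^d l_i, |n| := ∑_{i=1}^d n_i, |k| := ∑_{i=1}^d k_i, and C(n,l) denotes the binomial coefficient. (When |k| > |n| both sides vanish by the convention that falling factorials of naturals vanish.) -/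
open Polynomial Finset


lemma asc_split (s t : ℕ) (x : ℝ) :
    (ascPochhammer ℝ (s + t)).eval x =
      (ascPochhammer ℝ s).eval x * (ascPochhammer ℝ t).eval (x + s) := by
  rw [← ascPochhammer_mul, eval_mul, eval_comp, eval_add, eval_X, eval_natCast]

lemma asc_vand (x y : ℝ) : ∀ M : ℕ,
    ∑ j ∈ range (M + 1), (M.choose j : ℝ) * (ascPochhammer ℝ j).eval x *
        (ascPochhammer ℝ (M - j)).eval y = (ascPochhammer ℝ M).eval (x + y)
  | 0 => by simp
  | M + 1 => by
    have ih := asc_vand x y M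
    rw [Finset.sum_range_succ']
    have h1 : ∀ j ∈ range (M + 1),
        ((M+1).choose (j+1) : ℝ) * (ascPochhammer ℝ (j+1)).eval x *
          (ascPochhammer ℝ (M + 1 - (j+1))).eval y
        = (M.choose j : ℝ) * (ascPochhammer ℝ (j+1)).eval x *
            (ascPochhammer ℝ (M - j)).eval y
          + (M.choose (j+1) : ℝ) * (ascPochhammer ℝ (j+1)).eval x *
            (ascPochhammer ℝ (M + 1 - (j+1))).eval y := by
      intro j hj
      rw [Nat.succ_sub_succ, Nat.choose_succ_succ]
      push_cast
      ring
    rw [Finset.sum_congr rfl h1, Finset.sum_add_distrib, add_assoc]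
    have h2 : (∑ j ∈ range (M + 1), (M.choose (j+1) : ℝ) * (ascPochhammer ℝ (j+1)).eval x *
          (ascPochhammer ℝ (M + 1 - (j+1))).eval y)
        + (((M+1).choose 0 : ℝ) * (ascPochhammer ℝ 0).eval x *
            (ascPochhammer ℝ (M + 1 - 0)).eval y)
        = ∑ j ∈ range (M + 1), (M.choose j : ℝ) * (ascPochhammer ℝ j).eval x *
            (ascPochhammer ℝ (M + 1 - j)).eval y := by
      have := Finset.sum_range_succ' (fun j => (M.choose j : ℝ) * (ascPochhammer ℝ j).eval x *
          (ascPochhammer ℝ (M + 1 - j)).eval y) (M + 1)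
      simp only [Nat.choose_zero_right] at this ⊢
      rw [← this, Finset.sum_range_succ, Nat.choose_succ_self]
      simp
    rw [h2]
    have h3 : ∀ j ∈ range (M + 1),
        (M.choose j : ℝ) * (ascPochhammer ℝ (j+1)).eval x *
            (ascPochhammer ℝ (M - j)).eval y
          + (M.choose j : ℝ) * (ascPochhammer ℝ j).eval x *
            (ascPochhammer ℝ (M + 1 - j)).eval y
        = ((M.choose j : ℝ) * (ascPochhammer ℝ j).eval x *
            (ascPochhammer ℝ (M - j)).eval y) * (x + y + M) := by
      intro j hj
      have hj' : j ≤ M := Nat.lt_succ_iff.mp (mem_range.mp hj)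
      have hs : M + 1 - j = (M - j) + 1 := by omega
      have hc : ((M - j : ℕ) : ℝ) = (M : ℝ) - j := by
        rw [Nat.cast_sub hj']
      rw [hs, ascPochhammer_succ_eval, ascPochhammer_succ_eval, hc]
      ring
    rw [← Finset.sum_add_distrib, Finset.sum_congr rfl h3, ← Finset.sum_mul, ih,
      ascPochhammer_succ_eval]

lemma one_dim (n k : ℕ) (x b : ℝ) :
    ∑ m ∈ range (n + 1), (m.descFactorial k : ℝ) * (ascPochhammer ℝ m).eval x *
        (ascPochhammer ℝ (n - m)).eval b * (n.choose m : ℝ)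
      = (ascPochhammer ℝ k).eval x * (n.descFactorial k : ℝ) *
          (ascPochhammer ℝ (n - k)).eval (x + b + k) := by
  by_cases hkn : k ≤ n
  · -- terms with m < k vanish
    have hsplit : range (n + 1) = range k ∪ Ico k (n + 1) := by
      rw [range_eq_Ico, range_eq_Ico, Finset.Ico_union_Ico_eq_Ico (Nat.zero_le k) (by omega)]
    rw [hsplit, Finset.sum_union (by
      rw [range_eq_Ico]; exact Finset.Ico_disjoint_Ico_consecutive 0 k (n+1))]
    have hz : ∑ m ∈ range k, (m.descFactorial k : ℝ) * (ascPochhammer ℝ m).eval x *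
        (ascPochhammer ℝ (n - m)).eval b * (n.choose m : ℝ) = 0 := by
      apply Finset.sum_eq_zero
      intro m hm
      rw [Nat.descFactorial_eq_zero_iff_lt.mpr (mem_range.mp hm)]
      simp
    rw [hz, zero_add, Finset.sum_Ico_eq_sum_range]
    have hnk : n + 1 - k = (n - k) + 1 := by omega
    rw [hnk]
    have hterm : ∀ j ∈ range ((n - k) + 1),
        ((k + j).descFactorial k : ℝ) * (ascPochhammer ℝ (k + j)).eval x *
            (ascPochhammer ℝ (n - (k + j))).eval b * (n.choose (k + j) : ℝ)
        = ((ascPochhammer ℝ k).eval x * (n.descFactorial k : ℝ)) *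
            (((n - k).choose j : ℝ) * (ascPochhammer ℝ j).eval (x + k) *
              (ascPochhammer ℝ ((n - k) - j)).eval b) := by
      intro j hj
      have hjnk : j ≤ n - k := Nat.lt_succ_iff.mp (mem_range.mp hj)
      have hkj : k + j ≤ n := by omega
      have hcc : (k + j).descFactorial k * n.choose (k + j)
          = n.descFactorial k * (n - k).choose j := by
        have h1 := Nat.choose_mul (n := n) (Nat.le_add_right k j)
        have h2 : k + j - k = j := by omega
        rw [h2] at h1
        rw [Nat.descFactorial_eq_factorial_mul_choose, Nat.descFactorial_eq_factorial_mul_choose,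
          mul_assoc, mul_comm ((k + j).choose k), h1, mul_assoc]
      have hsub : n - (k + j) = (n - k) - j := by omega
      have : ((k + j).descFactorial k : ℝ) * (n.choose (k + j) : ℝ)
          = (n.descFactorial k : ℝ) * ((n - k).choose j : ℝ) := by
        exact_mod_cast congrArg (Nat.cast : ℕ → ℝ) hcc
      rw [hsub, asc_split k j x]
      linear_combination ((ascPochhammer ℝ k).eval x * (ascPochhammer ℝ j).eval (x + (k:ℝ)) *
        (ascPochhammer ℝ ((n - k) - j)).eval b) * this
    rw [Finset.sum_congr rfl hterm, ← Finset.mul_sum, asc_vand (x + k) b (n - k)]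
    ring
  · push_neg at hkn
    have hz : ∀ m ∈ range (n + 1), (m.descFactorial k : ℝ) * (ascPochhammer ℝ m).eval x *
        (ascPochhammer ℝ (n - m)).eval b * (n.choose m : ℝ) = 0 := by
      intro m hm
      have : m < k := by have := mem_range.mp hm; omega
      rw [Nat.descFactorial_eq_zero_iff_lt.mpr this]
      simp
    rw [Finset.sum_eq_zero hz, Nat.descFactorial_eq_zero_iff_lt.mpr hkn]
    simp

lemma sum_piFinset_cons {d : ℕ} (S : Fin (d + 1) → Finset ℕ) (F : (Fin (d + 1) → ℕ) → ℝ) :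
    ∑ l ∈ Fintype.piFinset S, F l
      = ∑ m ∈ S 0, ∑ t ∈ Fintype.piFinset (fun i : Fin d => S i.succ), F (Fin.cons m t) := by
  rw [← Finset.sum_product']
  refine Finset.sum_nbij' (fun l => (l 0, Fin.tail l)) (fun p => Fin.cons p.1 p.2) ?_ ?_ ?_ ?_ ?_
  · intro l hl
    rw [Fin.mem_piFinset_iff_zero_tail] at hl
    rw [Finset.mem_product]
    exact hl
  · intro p hp
    rw [Finset.mem_product] at hp
    rw [Fin.mem_piFinset_iff_zero_tail]
    simpa [Fin.tail_cons, Fin.tail] using hp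
  · intro l hl
    exact Fin.cons_self_tail l
  · intro p hp
    simp [Fin.tail_cons]
  · intro l hl
    rw [Fin.cons_self_tail l]

lemma aux : ∀ (d : ℕ) (k n : Fin d → ℕ) (a b : ℝ),
    ∑ l ∈ Fintype.piFinset (fun i => Finset.range (n i + 1)),
      (∏ i, ((l i).descFactorial (k i) : ℝ)) *
        (ascPochhammer ℝ (∑ i, l i)).eval a *
        (ascPochhammer ℝ (∑ i, n i - ∑ i, l i)).eval b *
        ∏ i, ((n i).choose (l i) : ℝ) =
    (ascPochhammer ℝ (∑ i, k i)).eval a *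
      (∏ i, ((n i).descFactorial (k i) : ℝ)) *
      (ascPochhammer ℝ (∑ i, n i - ∑ i, k i)).eval (a + b + (∑ i, k i))
  | 0, k, n, a, b => by
      have h0 : Fintype.piFinset (fun i : Fin 0 => Finset.range (n i + 1)) = {finZeroElim} := by
        apply Finset.eq_singleton_iff_unique_mem.mpr
        constructor
        · exact Fintype.mem_piFinset.mpr fun i => i.elim0
        · intro x _; funext i; exact i.elim0
      rw [h0, Finset.sum_singleton]
      simp
  | (d+1), k, n, a, b => by
      have IH := aux d
      rw [sum_piFinset_cons]
      simp only [Fin.sum_univ_succ, Fin.prod_univ_succ, Fin.cons_zero, Fin.cons_succ]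
      have step1 : ∀ m ∈ range (n 0 + 1),
          (∑ t ∈ Fintype.piFinset (fun i : Fin d => range (n i.succ + 1)),
            ((m.descFactorial (k 0) : ℝ) * ∏ i : Fin d, (((t i).descFactorial (k i.succ)) : ℝ)) *
              (ascPochhammer ℝ (m + ∑ i : Fin d, t i)).eval a *
              (ascPochhammer ℝ (n 0 + ∑ i : Fin d, n i.succ - (m + ∑ i : Fin d, t i))).eval b *
              (((n 0).choose m : ℝ) * ∏ i : Fin d, (((n i.succ).choose (t i)) : ℝ)))
          = ((m.descFactorial (k 0) : ℝ) * ((n 0).choose m : ℝ) * (ascPochhammer ℝ m).eval a *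
              (ascPochhammer ℝ (n 0 - m)).eval b) *
            ((ascPochhammer ℝ (∑ i : Fin d, k i.succ)).eval (a + (m:ℝ)) *
              (∏ i : Fin d, (((n i.succ).descFactorial (k i.succ)) : ℝ)) *
              (ascPochhammer ℝ (∑ i : Fin d, n i.succ - ∑ i : Fin d, k i.succ)).eval
                ((a + (m:ℝ)) + (b + ((n 0 - m : ℕ):ℝ)) + ((∑ i : Fin d, k i.succ : ℕ):ℝ))) := by
        intro m hm
        have hm' : m ≤ n 0 := mem_range_succ_iff.mp hm
        have hterm : ∀ t ∈ Fintype.piFinset (fun i : Fin d => range (n i.succ + 1)),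
            ((m.descFactorial (k 0) : ℝ) * ∏ i : Fin d, (((t i).descFactorial (k i.succ)) : ℝ)) *
              (ascPochhammer ℝ (m + ∑ i : Fin d, t i)).eval a *
              (ascPochhammer ℝ (n 0 + ∑ i : Fin d, n i.succ - (m + ∑ i : Fin d, t i))).eval b *
              (((n 0).choose m : ℝ) * ∏ i : Fin d, (((n i.succ).choose (t i)) : ℝ))
            = ((m.descFactorial (k 0) : ℝ) * ((n 0).choose m : ℝ) * (ascPochhammer ℝ m).eval a *
                (ascPochhammer ℝ (n 0 - m)).eval b) *
              ((∏ i : Fin d, (((t i).descFactorial (k i.succ)) : ℝ)) *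
                (ascPochhammer ℝ (∑ i : Fin d, t i)).eval ((a + (m:ℝ))) *
                (ascPochhammer ℝ (∑ i : Fin d, n i.succ - ∑ i : Fin d, t i)).eval ((b + ((n 0 - m : ℕ):ℝ))) *
                ∏ i : Fin d, (((n i.succ).choose (t i)) : ℝ)) := by
          intro t ht
          have htN : ∑ i : Fin d, t i ≤ ∑ i : Fin d, n i.succ := by
            apply Finset.sum_le_sum
            intro i _
            exact mem_range_succ_iff.mp (Fintype.mem_piFinset.mp ht i)
          have hsub : n 0 + ∑ i : Fin d, n i.succ - (m + ∑ i : Fin d, t i)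
              = (n 0 - m) + (∑ i : Fin d, n i.succ - ∑ i : Fin d, t i) := by omega
          rw [hsub, asc_split m (∑ i : Fin d, t i) a,
            asc_split (n 0 - m) (∑ i : Fin d, n i.succ - ∑ i : Fin d, t i) b]
          ring
        rw [Finset.sum_congr rfl hterm, ← Finset.mul_sum,
          IH (fun i => k i.succ) (fun i => n i.succ) (a + (m:ℝ)) (b + ((n 0 - m : ℕ):ℝ))]
      rw [Finset.sum_congr rfl step1]
      have step2 : ∀ m ∈ range (n 0 + 1),
          ((m.descFactorial (k 0) : ℝ) * ((n 0).choose m : ℝ) * (ascPochhammer ℝ m).eval a *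
              (ascPochhammer ℝ (n 0 - m)).eval b) *
            ((ascPochhammer ℝ (∑ i : Fin d, k i.succ)).eval (a + (m:ℝ)) *
              (∏ i : Fin d, (((n i.succ).descFactorial (k i.succ)) : ℝ)) *
              (ascPochhammer ℝ (∑ i : Fin d, n i.succ - ∑ i : Fin d, k i.succ)).eval
                ((a + (m:ℝ)) + (b + ((n 0 - m : ℕ):ℝ)) + ((∑ i : Fin d, k i.succ : ℕ):ℝ)))
          = ((∏ i : Fin d, (((n i.succ).descFactorial (k i.succ)) : ℝ)) *
              (ascPochhammer ℝ (∑ i : Fin d, n i.succ - ∑ i : Fin d, k i.succ)).eval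
                (a + b + ((n 0 : ℕ):ℝ) + ((∑ i : Fin d, k i.succ : ℕ):ℝ)) *
              (ascPochhammer ℝ (∑ i : Fin d, k i.succ)).eval a) *
            ((m.descFactorial (k 0) : ℝ) *
              (ascPochhammer ℝ m).eval (a + ((∑ i : Fin d, k i.succ : ℕ):ℝ)) *
              (ascPochhammer ℝ (n 0 - m)).eval b * ((n 0).choose m : ℝ)) := by
        intro m hm
        have hm' : m ≤ n 0 := mem_range_succ_iff.mp hm
        have e0 : ((n 0 - m : ℕ):ℝ) = (n 0 : ℝ) - m := Nat.cast_sub hm'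
        have e1 : (a + (m:ℝ)) + (b + ((n 0 - m : ℕ):ℝ)) + ((∑ i : Fin d, k i.succ : ℕ):ℝ)
            = a + b + ((n 0 : ℕ):ℝ) + ((∑ i : Fin d, k i.succ : ℕ):ℝ) := by
          rw [e0]; ring
        have e3 : (ascPochhammer ℝ m).eval a *
              (ascPochhammer ℝ (∑ i : Fin d, k i.succ)).eval (a + (m:ℝ))
            = (ascPochhammer ℝ (∑ i : Fin d, k i.succ)).eval a *
              (ascPochhammer ℝ m).eval (a + ((∑ i : Fin d, k i.succ : ℕ):ℝ)) := by
          rw [← asc_split m (∑ i : Fin d, k i.succ) a, ← asc_split (∑ i : Fin d, k i.succ) m a,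
            Nat.add_comm]
        rw [e1]
        linear_combination (((n 0).choose m : ℝ) * (m.descFactorial (k 0) : ℝ) *
          (ascPochhammer ℝ (n 0 - m)).eval b *
          (∏ i : Fin d, (((n i.succ).descFactorial (k i.succ)) : ℝ)) *
          (ascPochhammer ℝ (∑ i : Fin d, n i.succ - ∑ i : Fin d, k i.succ)).eval
            (a + b + ((n 0 : ℕ):ℝ) + ((∑ i : Fin d, k i.succ : ℕ):ℝ))) * e3
      rw [Finset.sum_congr rfl step2, ← Finset.mul_sum,
        one_dim (n 0) (k 0) (a + ((∑ i : Fin d, k i.succ : ℕ):ℝ)) b]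
      -- final scalar identity
      by_cases hall : ∀ i : Fin (d+1), k i ≤ n i
      · have hk0 : k 0 ≤ n 0 := hall 0
        have hKN : ∑ i : Fin d, k i.succ ≤ ∑ i : Fin d, n i.succ :=
          Finset.sum_le_sum fun i _ => hall i.succ
        have hsub2 : n 0 + ∑ i : Fin d, n i.succ - (k 0 + ∑ i : Fin d, k i.succ)
            = (n 0 - k 0) + (∑ i : Fin d, n i.succ - ∑ i : Fin d, k i.succ) := by omega
        rw [hsub2, asc_split (n 0 - k 0) (∑ i : Fin d, n i.succ - ∑ i : Fin d, k i.succ)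
          (a + b + ((k 0 + ∑ i : Fin d, k i.succ : ℕ):ℝ))]
        have e1 : (a + ((∑ i : Fin d, k i.succ : ℕ):ℝ)) + b + ((k 0 : ℕ):ℝ)
            = a + b + ((k 0 + ∑ i : Fin d, k i.succ : ℕ):ℝ) := by push_cast; ring
        have e2 : a + b + ((k 0 + ∑ i : Fin d, k i.succ : ℕ):ℝ) + ((n 0 - k 0 : ℕ):ℝ)
            = a + b + ((n 0 : ℕ):ℝ) + ((∑ i : Fin d, k i.succ : ℕ):ℝ) := by
          rw [Nat.cast_sub hk0]; push_cast; ring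
        rw [e1, e2]
        have e3 : (ascPochhammer ℝ (∑ i : Fin d, k i.succ)).eval a *
              (ascPochhammer ℝ (k 0)).eval (a + ((∑ i : Fin d, k i.succ : ℕ):ℝ))
            = (ascPochhammer ℝ (k 0 + ∑ i : Fin d, k i.succ)).eval a := by
          rw [← asc_split (∑ i : Fin d, k i.succ) (k 0) a, Nat.add_comm]
        linear_combination ((∏ i : Fin d, (((n i.succ).descFactorial (k i.succ)) : ℝ)) *
          ((n 0).descFactorial (k 0) : ℝ) *
          (ascPochhammer ℝ (n 0 - k 0)).eval (a + b + ((k 0 + ∑ i : Fin d, k i.succ : ℕ):ℝ)) *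
          (ascPochhammer ℝ (∑ i : Fin d, n i.succ - ∑ i : Fin d, k i.succ)).eval
            (a + b + ((n 0 : ℕ):ℝ) + ((∑ i : Fin d, k i.succ : ℕ):ℝ))) * e3
      · push_neg at hall
        obtain ⟨i, hi⟩ := hall
        have hz : ((n 0).descFactorial (k 0) : ℝ) *
            (∏ i : Fin d, (((n i.succ).descFactorial (k i.succ)) : ℝ)) = 0 := by
          rcases Fin.eq_zero_or_eq_succ i with h | ⟨j, rfl⟩
          · rw [h] at hi
            rw [Nat.descFactorial_eq_zero_iff_lt.mpr (by omega)]
            simp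
          · have : (((n j.succ).descFactorial (k j.succ)) : ℝ) = 0 := by
              rw [Nat.descFactorial_eq_zero_iff_lt.mpr (by omega)]
              simp
            rw [Finset.prod_eq_zero (Finset.mem_univ j) this]
            simp
        linear_combination ((ascPochhammer ℝ (∑ i : Fin d, k i.succ)).eval a *
            (ascPochhammer ℝ (k 0)).eval (a + ((∑ i : Fin d, k i.succ : ℕ):ℝ)) *
            (ascPochhammer ℝ (n 0 - k 0)).eval
              ((a + ((∑ i : Fin d, k i.succ : ℕ):ℝ)) + b + ((k 0 : ℕ):ℝ)) *
            (ascPochhammer ℝ (∑ i : Fin d, n i.succ - ∑ i : Fin d, k i.succ)).eval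
              (a + b + ((n 0 : ℕ):ℝ) + ((∑ i : Fin d, k i.succ : ℕ):ℝ)) -
          (ascPochhammer ℝ (k 0 + ∑ i : Fin d, k i.succ)).eval a *
            (ascPochhammer ℝ (n 0 + ∑ i : Fin d, n i.succ - (k 0 + ∑ i : Fin d, k i.succ))).eval
              (a + b + ((k 0 + ∑ i : Fin d, k i.succ : ℕ):ℝ))) * hz

/-- for `d ≥ 1`, multi-indices `k, n ∈ ℕ₀^d` and real `a, b`,
`∑_{l ≤ n} (∏ᵢ (lᵢ)_{kᵢ}) a^{(|l|)} b^{(|n|-|l|)} ∏ᵢ C(nᵢ, lᵢ)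
  = a^{(|k|)} (∏ᵢ (nᵢ)_{kᵢ}) (a+b+|k|)^{(|n|-|k|)}`. -/
theorem stmt_4 (d : ℕ) (hd : 1 ≤ d) (k n : Fin d → ℕ) (a b : ℝ) :
    ∑ l ∈ Fintype.piFinset (fun i => Finset.range (n i + 1)),
      (∏ i, ((l i).descFactorial (k i) : ℝ)) *
        (ascPochhammer ℝ (∑ i, l i)).eval a *
        (ascPochhammer ℝ (∑ i, n i - ∑ i, l i)).eval b *
        ∏ i, ((n i).choose (l i) : ℝ) =
    (ascPochhammer ℝ (∑ i, k i)).eval a *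
      (∏ i, ((n i).descFactorial (k i) : ℝ)) *
      (ascPochhammer ℝ (∑ i, n i - ∑ i, k i)).eval (a + b + (∑ i, k i)) := by
  exact aux d k n a b
end

section
/- Let a, b > 0 with a ∉ {1, 2}, and set γ_n^{(2)} := ∑_{l=2}^n C(n,l) λ_{n,l} · (l-1)². Then γ_n^{(2)} ~ n² as n → ∞. -/
open Polynomial Finset Filter

/-- The beta(a,b) coalescent merger rates
`λ_{m,k} = a^{(k-2)} b^{(m-k)} / (a+b)^{(m-2)}` (rising factorial powers). -/
noncomputable def betaRate (a b : ℝ) (m k : ℕ) : ℝ :=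
  (ascPochhammer ℝ (k - 2)).eval a * (ascPochhammer ℝ (m - k)).eval b /
    (ascPochhammer ℝ (m - 2)).eval (a + b)

/-- `γ_n^{(2)} = ∑_{l=2}^n C(n,l) λ_{n,l} · (l-1)²`. -/
noncomputable def gamma2 (a b : ℝ) (n : ℕ) : ℝ :=
  ∑ l ∈ Finset.Icc 2 n, (n.choose l : ℝ) * betaRate a b n l * ((l : ℝ) - 1) ^ 2

section Aux

/-- Vandermonde convolution for rising factorials over ℝ. -/
theorem asc_vandermonde (x y : ℝ) : ∀ n : ℕ,
    ∑ l ∈ Finset.range (n + 1), (n.choose l : ℝ) *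
      (ascPochhammer ℝ l).eval x * (ascPochhammer ℝ (n - l)).eval y
      = (ascPochhammer ℝ n).eval (x + y) := by
  intro n
  induction n with
  | zero => simp
  | succ n ih =>
    set Px := fun l : ℕ => (ascPochhammer ℝ l).eval x with hPx
    set Py := fun l : ℕ => (ascPochhammer ℝ l).eval y with hPy
    have key : ∀ l ∈ Finset.range (n + 1),
        (n.choose l : ℝ) * Px l * Py (n - l) * ((x + l) + (y + (n - l : ℕ)))
        = (n.choose l : ℝ) * Px l * Py (n - l) * (x + y + n) := by
      intro l hl
      rw [Finset.mem_range] at hl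
      have : ((n - l : ℕ) : ℝ) = (n : ℝ) - l := by
        rw [Nat.cast_sub (Nat.lt_succ_iff.mp hl)]
      rw [this]; ring
    have hg : (∑ l ∈ Finset.range (n + 1),
          (n.choose (l + 1) : ℝ) * Px (l + 1) * Py (n - l)) + Py (n + 1)
        = ∑ l ∈ Finset.range (n + 1), (n.choose l : ℝ) * Px l *
            (Py (n - l) * (y + (n - l : ℕ))) := by
      have e1 := Finset.sum_range_succ'
        (fun l => (n.choose l : ℝ) * Px l * Py (n + 1 - l)) (n + 1)
      have e2 := Finset.sum_range_succ
        (fun l => (n.choose l : ℝ) * Px l * Py (n + 1 - l)) (n + 1)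
      simp only [Nat.choose_succ_self, Nat.cast_zero, zero_mul, add_zero, Nat.choose_zero_right,
        Nat.cast_one, one_mul, Nat.sub_zero] at e2 e1
      have e3 : ∀ l ∈ Finset.range (n + 1),
          (n.choose l : ℝ) * Px l * Py (n + 1 - l)
          = (n.choose l : ℝ) * Px l * (Py (n - l) * (y + (n - l : ℕ))) := by
        intro l hl
        rw [Finset.mem_range] at hl
        have : n + 1 - l = (n - l) + 1 := by omega
        rw [this, hPy]
        simp only [ascPochhammer_succ_eval]
      rw [Finset.sum_congr rfl e3] at e2
      have e4 : ∀ l ∈ Finset.range (n + 1),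
          (n.choose (l + 1) : ℝ) * Px (l + 1) * Py (n + 1 - (l + 1))
          = (n.choose (l + 1) : ℝ) * Px (l + 1) * Py (n - l) := by
        intro l hl; rw [Nat.succ_sub_succ]
      rw [Finset.sum_congr rfl e4] at e1
      have hPx0 : Px 0 = 1 := by rw [hPx]; simp
      rw [hPx0] at e1
      rw [← e2, e1]; ring
    rw [Finset.sum_range_succ' _ (n + 1)]
    have pascal : ∀ l ∈ Finset.range (n + 1),
        ((n + 1).choose (l + 1) : ℝ) * Px (l + 1) * Py (n + 1 - (l + 1))
        = (n.choose l : ℝ) * Px l * Py (n - l) * (x + l)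
          + (n.choose (l + 1) : ℝ) * Px (l + 1) * Py (n - l) := by
      intro l hl
      rw [Nat.choose_succ_succ, Nat.cast_add, Nat.succ_sub_succ, hPx]
      simp only [ascPochhammer_succ_eval]
      ring
    rw [Finset.sum_congr rfl pascal, Finset.sum_add_distrib]
    have h0 : ((n + 1).choose 0 : ℝ) * Px 0 * Py (n + 1 - 0) = Py (n + 1) := by
      simp [hPx]
    rw [h0, add_assoc, hg, ← Finset.sum_add_distrib]
    have : ∀ l ∈ Finset.range (n + 1),
        (n.choose l : ℝ) * Px l * Py (n - l) * (x + l)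
          + (n.choose l : ℝ) * Px l * (Py (n - l) * (y + (n - l : ℕ)))
        = ((n.choose l : ℝ) * Px l * Py (n - l)) * (x + y + n) := by
      intro l hl
      have := key l hl
      calc (n.choose l : ℝ) * Px l * Py (n - l) * (x + l)
            + (n.choose l : ℝ) * Px l * (Py (n - l) * (y + (n - l : ℕ)))
          = (n.choose l : ℝ) * Px l * Py (n - l) * ((x + l) + (y + (n - l : ℕ))) := by ring
        _ = _ := this
    rw [Finset.sum_congr rfl this, ← Finset.sum_mul, ih, ascPochhammer_succ_eval]

theorem asc_tail (x y : ℝ) (n : ℕ) (hn : 2 ≤ n) :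
    ∑ l ∈ Finset.Icc 2 n, (n.choose l : ℝ) *
      (ascPochhammer ℝ l).eval x * (ascPochhammer ℝ (n - l)).eval y
      = (ascPochhammer ℝ n).eval (x + y) - (ascPochhammer ℝ n).eval y
        - n * x * (ascPochhammer ℝ (n - 1)).eval y := by
  have h := asc_vandermonde x y n
  rw [Finset.range_eq_Ico] at h
  rw [Finset.sum_eq_sum_Ico_succ_bot (by omega : 0 < n + 1)] at h
  rw [Finset.sum_eq_sum_Ico_succ_bot (by omega : 1 < n + 1)] at h
  have hIcc : Finset.Icc 2 n = Finset.Ico 2 (n + 1) := by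
    rw [Finset.Ico_add_one_right_eq_Icc]
  rw [hIcc]
  simp only [Nat.choose_zero_right, Nat.cast_one, one_mul, ascPochhammer_zero,
    Polynomial.eval_one, Nat.sub_zero, Nat.choose_one_right, ascPochhammer_one,
    Polynomial.eval_X] at h
  linarith [h]

lemma asc_eval_succ_left (r : ℝ) (n : ℕ) :
    (ascPochhammer ℝ (n + 1)).eval r = r * (ascPochhammer ℝ n).eval (r + 1) := by
  rw [ascPochhammer_succ_left]
  simp [Polynomial.eval_comp]

lemma pt_identity (a : ℝ) (ha1 : a ≠ 1) (ha2 : a ≠ 2) (l : ℕ) (hl : 2 ≤ l) :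
    (ascPochhammer ℝ (l - 2)).eval a * ((l : ℝ) - 1) ^ 2
      = (ascPochhammer ℝ l).eval a
        - (2 * a - 1) / (a - 1) * (ascPochhammer ℝ l).eval (a - 1)
        + (a - 1) / (a - 2) * (ascPochhammer ℝ l).eval (a - 2) := by
  obtain ⟨m, rfl⟩ : ∃ m, l = m + 2 := ⟨l - 2, by omega⟩
  have e0 : m + 2 - 2 = m := by omega
  rw [e0]
  have e1 : (ascPochhammer ℝ (m + 2)).eval a
      = (ascPochhammer ℝ m).eval a * (a + m) * (a + m + 1) := by
    show (ascPochhammer ℝ (m + 1 + 1)).eval a = _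
    rw [ascPochhammer_succ_eval, ascPochhammer_succ_eval]
    push_cast; ring
  have e2 : (ascPochhammer ℝ (m + 2)).eval (a - 1)
      = (a - 1) * ((ascPochhammer ℝ m).eval a * (a + m)) := by
    show (ascPochhammer ℝ (m + 1 + 1)).eval (a - 1) = _
    rw [asc_eval_succ_left, ascPochhammer_succ_eval]
    have : a - 1 + 1 = a := by ring
    rw [this]
  have e3 : (ascPochhammer ℝ (m + 2)).eval (a - 2)
      = (a - 2) * ((a - 1) * (ascPochhammer ℝ m).eval a) := by
    show (ascPochhammer ℝ (m + 1 + 1)).eval (a - 2) = _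
    rw [asc_eval_succ_left, asc_eval_succ_left]
    have : a - 2 + 1 + 1 = a := by ring
    rw [this]
    ring
  rw [e1, e2, e3]
  have h1 : a - 1 ≠ 0 := sub_ne_zero.mpr ha1
  have h2 : a - 2 ≠ 0 := sub_ne_zero.mpr ha2
  field_simp
  push_cast
  ring

lemma gamma2_closed (a b : ℝ) (ha : 0 < a) (hb : 0 < b) (ha1 : a ≠ 1) (ha2 : a ≠ 2)
    (m : ℕ) :
    gamma2 a b (m + 2)
      = (a + b + m) * (a + b + m + 1)
        - (2 * a - 1) / (a - 1) * ((a + b - 1) * (a + b + m))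
        + (a - 1) / (a - 2) * ((a + b - 2) * (a + b - 1))
        - ((b + m) * (b + m + 1)) / ((a - 1) * (a - 2))
          * ((ascPochhammer ℝ m).eval b / (ascPochhammer ℝ m).eval (a + b)) := by
  have hD : (0 : ℝ) < (ascPochhammer ℝ m).eval (a + b) :=
    ascPochhammer_pos m _ (by linarith)
  have h1 : a - 1 ≠ 0 := sub_ne_zero.mpr ha1
  have h2 : a - 2 ≠ 0 := sub_ne_zero.mpr ha2
  set D := (ascPochhammer ℝ m).eval (a + b) with hDdef
  have em : m + 2 - 2 = m := by omega
  -- Step 1: pull out the common denominator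
  have step1 : gamma2 a b (m + 2)
      = (∑ l ∈ Finset.Icc 2 (m + 2), ((m + 2).choose l : ℝ)
          * ((ascPochhammer ℝ (l - 2)).eval a * ((l : ℝ) - 1) ^ 2)
          * (ascPochhammer ℝ (m + 2 - l)).eval b) / D := by
    rw [gamma2, Finset.sum_div]
    refine Finset.sum_congr rfl fun l hl => ?_
    rw [betaRate, em, ← hDdef]
    field_simp
  -- Step 2: pointwise rewrite
  have step2 : ∀ l ∈ Finset.Icc 2 (m + 2), ((m + 2).choose l : ℝ)
          * ((ascPochhammer ℝ (l - 2)).eval a * ((l : ℝ) - 1) ^ 2)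
          * (ascPochhammer ℝ (m + 2 - l)).eval b
      = ((m + 2).choose l : ℝ) * (ascPochhammer ℝ l).eval a
          * (ascPochhammer ℝ (m + 2 - l)).eval b
        - (2 * a - 1) / (a - 1) * (((m + 2).choose l : ℝ) * (ascPochhammer ℝ l).eval (a - 1)
          * (ascPochhammer ℝ (m + 2 - l)).eval b)
        + (a - 1) / (a - 2) * (((m + 2).choose l : ℝ) * (ascPochhammer ℝ l).eval (a - 2)
          * (ascPochhammer ℝ (m + 2 - l)).eval b) := by
    intro l hl
    rw [Finset.mem_Icc] at hl
    rw [pt_identity a ha1 ha2 l hl.1]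
    ring
  rw [step1, Finset.sum_congr rfl step2]
  rw [Finset.sum_add_distrib, Finset.sum_sub_distrib, ← Finset.mul_sum, ← Finset.mul_sum]
  rw [asc_tail a b (m + 2) (by omega), asc_tail (a - 1) b (m + 2) (by omega),
    asc_tail (a - 2) b (m + 2) (by omega)]
  -- expand the pochhammers at m+2 and m+1
  have ea : (ascPochhammer ℝ (m + 2)).eval (a + b) = D * (a + b + m) * (a + b + m + 1) := by
    show (ascPochhammer ℝ (m + 1 + 1)).eval (a + b) = _
    rw [ascPochhammer_succ_eval, ascPochhammer_succ_eval]
    push_cast; ring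
  have ea1 : (ascPochhammer ℝ (m + 2)).eval (a - 1 + b)
      = (a + b - 1) * (D * (a + b + m)) := by
    show (ascPochhammer ℝ (m + 1 + 1)).eval (a - 1 + b) = _
    rw [asc_eval_succ_left, ascPochhammer_succ_eval]
    have : a - 1 + b + 1 = a + b := by ring
    rw [this]
    ring
  have ea2 : (ascPochhammer ℝ (m + 2)).eval (a - 2 + b)
      = (a + b - 2) * ((a + b - 1) * D) := by
    show (ascPochhammer ℝ (m + 1 + 1)).eval (a - 2 + b) = _
    rw [asc_eval_succ_left, asc_eval_succ_left]
    have : a - 2 + b + 1 + 1 = a + b := by ring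
    rw [this]
    ring
  have eb : (ascPochhammer ℝ (m + 2)).eval b
      = (ascPochhammer ℝ m).eval b * (b + m) * (b + m + 1) := by
    show (ascPochhammer ℝ (m + 1 + 1)).eval b = _
    rw [ascPochhammer_succ_eval, ascPochhammer_succ_eval]
    push_cast; ring
  have eb1 : (m + 2 - 1 : ℕ) = m + 1 := by omega
  have eb2 : (ascPochhammer ℝ (m + 1)).eval b = (ascPochhammer ℝ m).eval b * (b + m) := by
    rw [ascPochhammer_succ_eval]
  rw [eb1, ea, ea1, ea2, eb, eb2]
  field_simp
  ring

lemma asc_ratio_le (a b : ℝ) (ha : 0 < a) (hb : 0 < b) (m : ℕ) :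
    (ascPochhammer ℝ m).eval b
      ≤ (ascPochhammer ℝ m).eval (a + b) * (b / (b + m)) ^ (min a 1 : ℝ) := by
  set p : ℝ := min a 1 with hp
  have hp0 : 0 < p := lt_min ha one_pos
  have hp1 : p ≤ 1 := min_le_right _ _
  have hpa : p ≤ a := min_le_left _ _
  induction m with
  | zero =>
    simp only [ascPochhammer_zero, Polynomial.eval_one, Nat.cast_zero, add_zero]
    rw [div_self (ne_of_gt hb), Real.one_rpow]
    norm_num
  | succ m ih =>
    have hbm : (0 : ℝ) < b + m := by positivity
    have hbm1 : (0 : ℝ) < b + m + 1 := by positivity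
    have hPb : (0 : ℝ) < (ascPochhammer ℝ m).eval (a + b) :=
      ascPochhammer_pos m _ (by linarith)
    rw [ascPochhammer_succ_eval, ascPochhammer_succ_eval]
    have hsplit : (b / (b + (m + 1 : ℕ))) ^ (p : ℝ)
        = (b / (b + m)) ^ (p : ℝ) * ((b + m) / (b + m + 1)) ^ (p : ℝ) := by
      rw [← Real.mul_rpow (by positivity) (by positivity)]
      push_cast
      rw [div_mul_div_comm]
      congr 1
      rw [div_eq_div_iff (by positivity) (by positivity)]
      ring
    rw [hsplit]
    set X : ℝ := ((b + m + 1) / (b + m)) ^ (p : ℝ) with hXdef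
    have hXpos : 0 < X := Real.rpow_pos_of_pos (by positivity) _
    have hX : X ≤ 1 + a / (b + m) := by
      have hrw : (b + m + 1) / (b + m) = 1 + 1 / (b + m) := by field_simp
      rw [hXdef, hrw]
      have hs : (-1 : ℝ) ≤ 1 / (b + m) := by
        have h0 : (0:ℝ) ≤ 1 / (b + m) := by positivity
        linarith
      have hbern := rpow_one_add_le_one_add_mul_self hs (le_of_lt hp0) hp1
      refine hbern.trans ?_
      have : p * (1 / (b + m)) ≤ a * (1 / (b + m)) :=
        mul_le_mul_of_nonneg_right hpa (by positivity)
      have ha' : a * (1 / (b + m)) = a / (b + m) := by ring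
      linarith
    have hinv : ((b + m) / (b + m + 1)) ^ (p : ℝ) = X⁻¹ := by
      rw [hXdef, ← Real.inv_rpow (by positivity)]
      congr 1
      field_simp
    have key : (b + m) ≤ (a + b + m) * ((b + m) / (b + m + 1)) ^ (p : ℝ) := by
      rw [hinv]
      have h1 : (b + m) * X ≤ a + b + m := by
        calc (b + m) * X ≤ (b + m) * (1 + a / (b + m)) :=
              mul_le_mul_of_nonneg_left hX (le_of_lt hbm)
          _ = a + b + m := by field_simp; ring
      rw [← div_eq_mul_inv, le_div_iff₀ hXpos, mul_comm]
      linarith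
    calc (ascPochhammer ℝ m).eval b * (b + m)
        ≤ ((ascPochhammer ℝ m).eval (a + b) * (b / (b + m)) ^ (p : ℝ)) * (b + m) :=
          mul_le_mul_of_nonneg_right ih (le_of_lt hbm)
      _ ≤ ((ascPochhammer ℝ m).eval (a + b) * (b / (b + m)) ^ (p : ℝ))
            * ((a + b + m) * ((b + m) / (b + m + 1)) ^ (p : ℝ)) := by
          apply mul_le_mul_of_nonneg_left key
          positivity
      _ = (ascPochhammer ℝ m).eval (a + b) * (a + b + m)
            * ((b / (b + m)) ^ (p : ℝ) * ((b + m) / (b + m + 1)) ^ (p : ℝ)) := by ring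

lemma asc_ratio_tendsto (a b : ℝ) (ha : 0 < a) (hb : 0 < b) :
    Tendsto (fun m : ℕ => (ascPochhammer ℝ m).eval b / (ascPochhammer ℝ m).eval (a + b))
      atTop (nhds 0) := by
  set p : ℝ := min a 1 with hp
  have hp0 : 0 < p := lt_min ha one_pos
  have hg : Tendsto (fun m : ℕ => (b / (b + m)) ^ (p : ℝ)) atTop (nhds 0) := by
    have h1 : Tendsto (fun m : ℕ => b + (m : ℝ)) atTop atTop :=
      tendsto_atTop_add_const_left _ b tendsto_natCast_atTop_atTop
    have h2 : Tendsto (fun m : ℕ => b / (b + (m : ℝ))) atTop (nhds 0) :=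
      Tendsto.div_atTop tendsto_const_nhds h1
    have h3 := h2.rpow_const (p := p) (Or.inr (le_of_lt hp0))
    rwa [Real.zero_rpow (ne_of_gt hp0)] at h3
  apply squeeze_zero (fun m => ?_) (fun m => ?_) hg
  · have h1 : (0 : ℝ) < (ascPochhammer ℝ m).eval b := ascPochhammer_pos m _ hb
    have h2 : (0 : ℝ) < (ascPochhammer ℝ m).eval (a + b) :=
      ascPochhammer_pos m _ (by linarith)
    positivity
  · have h2 : (0 : ℝ) < (ascPochhammer ℝ m).eval (a + b) :=
      ascPochhammer_pos m _ (by linarith)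
    rw [div_le_iff₀ h2, mul_comm]
    exact asc_ratio_le a b ha hb m

end Aux

/-- for `a, b > 0`, `a ∉ {1,2}`, one has `γ_n^{(2)} ~ n²` as `n → ∞`. -/
theorem stmt_10 (a b : ℝ) (ha : 0 < a) (hb : 0 < b) (ha1 : a ≠ 1) (ha2 : a ≠ 2) :
    Tendsto (fun n : ℕ => gamma2 a b n / (n : ℝ) ^ 2) atTop (nhds 1) := by
  rw [← tendsto_add_atTop_iff_nat 2]
  have h1 : a - 1 ≠ 0 := sub_ne_zero.mpr ha1
  have h2 : a - 2 ≠ 0 := sub_ne_zero.mpr ha2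
  -- basic limits
  have hone : Tendsto (fun m : ℕ => ((m : ℝ) + 2)⁻¹) atTop (nhds 0) := by
    apply Filter.Tendsto.comp tendsto_inv_atTop_zero
    exact tendsto_atTop_add_const_right _ 2 tendsto_natCast_atTop_atTop
  have hgen : ∀ c : ℝ, Tendsto (fun m : ℕ => (c + m) / ((m : ℝ) + 2)) atTop (nhds 1) := by
    intro c
    have heq : ∀ m : ℕ, (c + m) / ((m : ℝ) + 2) = 1 + (c - 2) * ((m : ℝ) + 2)⁻¹ := by
      intro m
      have hm : ((m : ℝ) + 2) ≠ 0 := by positivity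
      field_simp
      ring
    rw [show (1 : ℝ) = 1 + (c - 2) * 0 by ring]
    exact Tendsto.congr (fun m => (heq m).symm)
      (tendsto_const_nhds.add (tendsto_const_nhds.mul hone))
  have hρ := asc_ratio_tendsto a b ha hb
  set K2 : ℝ := (2 * a - 1) / (a - 1) * (a + b - 1) with hK2
  set K3 : ℝ := (a - 1) / (a - 2) * ((a + b - 2) * (a + b - 1)) with hK3
  set K4 : ℝ := 1 / ((a - 1) * (a - 2)) with hK4
  have hlim : Tendsto (fun m : ℕ =>
      ((a + b + m) / ((m : ℝ) + 2)) * ((a + b + 1 + m) / ((m : ℝ) + 2))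
        - K2 * ((a + b + m) / ((m : ℝ) + 2)) * ((m : ℝ) + 2)⁻¹
        + K3 * (((m : ℝ) + 2)⁻¹ * ((m : ℝ) + 2)⁻¹)
        - K4 * (((b + m) / ((m : ℝ) + 2)) * ((b + 1 + m) / ((m : ℝ) + 2)))
          * ((ascPochhammer ℝ m).eval b / (ascPochhammer ℝ m).eval (a + b)))
      atTop (nhds 1) := by
    have := ((((hgen (a + b)).mul (hgen (a + b + 1))).sub
        (((tendsto_const_nhds (x := K2)).mul (hgen (a + b))).mul hone)).add
        ((tendsto_const_nhds (x := K3)).mul (hone.mul hone))).sub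
        (((tendsto_const_nhds (x := K4)).mul ((hgen b).mul (hgen (b + 1)))).mul hρ)
    simpa using this
  apply hlim.congr
  intro m
  rw [gamma2_closed a b ha hb ha1 ha2 m]
  have hD : (0 : ℝ) < (ascPochhammer ℝ m).eval (a + b) :=
    ascPochhammer_pos m _ (by linarith)
  have hm : ((m : ℝ) + 2) ≠ 0 := by positivity
  push_cast
  rw [hK2, hK3, hK4]
  field_simp
  ring
end

section
/- Let 0 < a < 1, b > 0, K := Γ(a+b)/((2-a)·Γ(b)), t ≥ 0, and set c := (1 + K·t)^{1/(a-1)}. Then for every integer i ≥ 1, the i-th derivative at x = 0 of the function x ↦ ((1-x)^{a-1} + K·t)^{1/(a-1)} (defined for x in a neighbourhood of 0) equals -c^{2-a} · ∑_{l=1}^{i} (1/(1-a))^{(l)} · (-c^{1-a})^{l-1} · ∑_{π ∈ P(i,l)} ∏_{B ∈ π} (1-a)^{(|B|)}. Consequently the coefficient c_i(t) := -(1/i!) · (d/dx)^i|_{x=0} of the limiting block size spectrum equals (c^{2-a}/i!) · ∑_{l=1}^{i} (1/(1-a))^{(l)} · (-c^{1-a})^{l-1} · ∑_{π ∈ P(i,l)}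 ∏_{B ∈ π} (1-a)^{(|B|)}. -/
open Polynomial Finset Real

section Combinatorics

namespace OrderedFinpartition

variable {n : ℕ} (c : OrderedFinpartition n)

/-- The part of an ordered finpartition, as a `Finset`. -/
def partFinset (m : Fin c.length) : Finset (Fin n) := Finset.univ.image (c.emb m)

lemma partFinset_def (m : Fin c.length) :
    c.partFinset m = Finset.univ.image (c.emb m) := rfl

lemma coe_partFinset (m : Fin c.length) : (c.partFinset m : Set (Fin n)) = Set.range (c.emb m) := by
  simp [partFinset]

lemma card_partFinset (m : Fin c.length) : (c.partFinset m).card = c.partSize m := by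
  rw [partFinset_def, Finset.card_image_of_injective _ (c.emb_strictMono m).injective,
    Finset.card_univ, Fintype.card_fin]

lemma partFinset_nonempty (m : Fin c.length) : (c.partFinset m).Nonempty := by
  have : Nonempty (Fin (c.partSize m)) := ⟨⟨0, c.partSize_pos m⟩⟩
  exact Finset.Nonempty.image Finset.univ_nonempty _

lemma max'_partFinset (m : Fin c.length) :
    (c.partFinset m).max' (c.partFinset_nonempty m) =
      c.emb m ⟨c.partSize m - 1, Nat.sub_one_lt_of_lt (c.partSize_pos m)⟩ := by
  apply le_antisymm
  · have h := Finset.max'_mem _ (c.partFinset_nonempty m)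
    obtain ⟨j, -, hj⟩ := Finset.mem_image.1 h
    rw [← hj]
    exact (c.emb_strictMono m).monotone (by
      rw [Fin.le_def]; exact Nat.le_sub_one_of_lt j.2)
  · exact Finset.le_max' _ _ (Finset.mem_image_of_mem _ (Finset.mem_univ _))

lemma partFinset_injective : Function.Injective c.partFinset := by
  intro m m' h
  by_contra hne
  have hd := c.disjoint (Set.mem_univ m) (Set.mem_univ m') hne
  have : Disjoint (c.partFinset m) (c.partFinset m') := by
    rw [← Finset.disjoint_coe, c.coe_partFinset, c.coe_partFinset]
    exact hd
  obtain ⟨x, hx⟩ := c.partFinset_nonempty m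
  exact (Finset.disjoint_left.1 this) hx (h ▸ hx)

/-- The unordered finpartition associated to an ordered finpartition. -/
def toFinp : Finpartition (Finset.univ : Finset (Fin n)) where
  parts := Finset.univ.image c.partFinset
  supIndep := by
    rw [Finset.supIndep_iff_pairwiseDisjoint]
    intro x hx y hy hxy
    simp only [Finset.coe_image, Finset.coe_univ, Set.image_univ, Set.mem_range] at hx hy
    obtain ⟨m, rfl⟩ := hx
    obtain ⟨m', rfl⟩ := hy
    have hmm' : m ≠ m' := fun h => hxy (by rw [h])
    have hd := c.disjoint (Set.mem_univ m) (Set.mem_univ m') hmm'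
    simp only [Function.onFun, id_eq]
    rw [← Finset.disjoint_coe, c.coe_partFinset, c.coe_partFinset]
    exact hd
  sup_parts := by
    apply le_antisymm le_top
    intro x _
    rw [Finset.mem_sup]
    obtain ⟨m, j, hj⟩ := c.cover x
    exact ⟨c.partFinset m, Finset.mem_image_of_mem _ (Finset.mem_univ _),
      by rw [partFinset_def]; exact hj ▸ Finset.mem_image_of_mem _ (Finset.mem_univ _)⟩
  bot_notMem := by
    simp only [Finset.bot_eq_empty, Finset.mem_image, not_exists]
    rintro m ⟨-, hm⟩
    exact (c.partFinset_nonempty m).ne_empty hm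

lemma parts_toFinp : c.toFinp.parts = Finset.univ.image c.partFinset := rfl

lemma card_parts_toFinp : c.toFinp.parts.card = c.length := by
  rw [parts_toFinp, Finset.card_image_of_injective _ c.partFinset_injective,
    Finset.card_univ, Fintype.card_fin]

lemma prod_parts_toFinp (w : ℕ → ℝ) :
    ∏ B ∈ c.toFinp.parts, w B.card = ∏ m, w (c.partSize m) := by
  rw [parts_toFinp, Finset.prod_image (fun m _ m' _ h => c.partFinset_injective h)]
  exact Finset.prod_congr rfl fun m _ => by rw [c.card_partFinset]

end OrderedFinpartition

namespace Finpartition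

variable {n : ℕ} (P : Finpartition (Finset.univ : Finset (Fin n)))

/-- The set of maxima of the parts. -/
def maxes : Finset (Fin n) :=
  P.parts.attach.image (fun B => B.1.max' (P.nonempty_of_mem_parts B.2))

lemma mem_maxes {x : Fin n} :
    x ∈ P.maxes ↔ ∃ B : {B // B ∈ P.parts}, B.1.max' (P.nonempty_of_mem_parts B.2) = x := by
  simp [maxes]

lemma card_maxes : P.maxes.card = P.parts.card := by
  rw [maxes, Finset.card_image_of_injective, Finset.card_attach]
  intro B B' h
  simp only [] at h
  have h1 : B.1.max' (P.nonempty_of_mem_parts B.2) ∈ B.1 := Finset.max'_mem _ _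
  have h2 : B.1.max' (P.nonempty_of_mem_parts B.2) ∈ B'.1 := by
    rw [h]; exact Finset.max'_mem _ _
  exact Subtype.ext (P.eq_of_mem_parts B.2 B'.2 h1 h2)

/-- The parts ordered by their maxima. -/
def pt (m : Fin P.parts.card) : Finset (Fin n) :=
  P.part (P.maxes.orderEmbOfFin P.card_maxes m)

lemma pt_spec (m : Fin P.parts.card) :
    P.pt m ∈ P.parts ∧ ∃ h : (P.pt m).Nonempty,
      (P.pt m).max' h = P.maxes.orderEmbOfFin P.card_maxes m := by
  have hm : P.maxes.orderEmbOfFin P.card_maxes m ∈ P.maxes :=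
    Finset.orderEmbOfFin_mem _ _ _
  obtain ⟨B, hB⟩ := P.mem_maxes.1 hm
  have hmem : P.maxes.orderEmbOfFin P.card_maxes m ∈ B.1 := by
    rw [← hB]; exact Finset.max'_mem _ _
  have hpt : P.pt m = B.1 := P.part_eq_of_mem B.2 hmem
  refine ⟨hpt ▸ B.2, ?_⟩
  rw [hpt]
  exact ⟨_, hB⟩

lemma pt_mem_parts (m : Fin P.parts.card) : P.pt m ∈ P.parts := (P.pt_spec m).1

lemma pt_nonempty (m : Fin P.parts.card) : (P.pt m).Nonempty :=
  P.nonempty_of_mem_parts (P.pt_mem_parts m)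

lemma max'_pt (m : Fin P.parts.card) :
    (P.pt m).max' (P.pt_nonempty m) = P.maxes.orderEmbOfFin P.card_maxes m := by
  obtain ⟨-, h, hh⟩ := P.pt_spec m
  exact hh

lemma pt_injective : Function.Injective P.pt := by
  intro m m' h
  have key : (P.pt m).max' (P.pt_nonempty m) = (P.pt m').max' (P.pt_nonempty m') := by
    congr 1
  rw [P.max'_pt m, P.max'_pt m'] at key
  exact (P.maxes.orderEmbOfFin P.card_maxes).injective key

/-- The ordered finpartition associated to a finpartition of `univ : Finset (Fin n)`. -/
def toOrdered : OrderedFinpartition n where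
  length := P.parts.card
  partSize m := (P.pt m).card
  partSize_pos m := Finset.card_pos.2 (P.pt_nonempty m)
  emb m := (P.pt m).orderEmbOfFin rfl
  emb_strictMono m := ((P.pt m).orderEmbOfFin rfl).strictMono
  parts_strictMono := by
    have key : ∀ m : Fin P.parts.card,
        (P.pt m).orderEmbOfFin rfl ⟨(P.pt m).card - 1,
          Nat.sub_one_lt_of_lt (Finset.card_pos.2 (P.pt_nonempty m))⟩ =
        P.maxes.orderEmbOfFin P.card_maxes m := by
      intro m
      rw [Finset.orderEmbOfFin_last rfl (Finset.card_pos.2 (P.pt_nonempty m))]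
      exact P.max'_pt m
    intro m m' hmm'
    have h2 := (P.maxes.orderEmbOfFin P.card_maxes).strictMono hmm'
    rw [← key m, ← key m'] at h2
    exact h2
  disjoint := by
    intro m _ m' _ hne
    have hpt : P.pt m ≠ P.pt m' := fun h => hne (P.pt_injective h)
    have := P.disjoint (P.pt_mem_parts m) (P.pt_mem_parts m') hpt
    simp only [Function.onFun, Finset.range_orderEmbOfFin]
    exact Finset.disjoint_coe.2 this
  cover := by
    intro x
    have hx : x ∈ P.part x := P.mem_part (Finset.mem_univ x)
    have hpart : P.part x ∈ P.parts := P.part_mem.2 (Finset.mem_univ x)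
    have hmax : (P.part x).max' (P.nonempty_of_mem_parts hpart) ∈ P.maxes :=
      P.mem_maxes.2 ⟨⟨P.part x, hpart⟩, rfl⟩
    have : (P.part x).max' (P.nonempty_of_mem_parts hpart) ∈
        Set.range (P.maxes.orderEmbOfFin P.card_maxes) := by
      rw [Finset.range_orderEmbOfFin]
      exact hmax
    obtain ⟨m, hm⟩ := this
    have hpt : P.pt m = P.part x := by
      apply P.part_eq_of_mem hpart
      rw [hm]
      exact Finset.max'_mem _ _
    refine ⟨m, ?_⟩
    rw [Finset.range_orderEmbOfFin, hpt]
    exact hx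

lemma length_toOrdered : P.toOrdered.length = P.parts.card := rfl

lemma partFinset_toOrdered (m : Fin P.toOrdered.length) :
    P.toOrdered.partFinset m = P.pt m := by
  apply Finset.coe_injective
  rw [OrderedFinpartition.coe_partFinset]
  exact Finset.range_orderEmbOfFin _ _

lemma toFinp_toOrdered : P.toOrdered.toFinp = P := by
  ext B
  rw [OrderedFinpartition.parts_toFinp]
  constructor
  · intro hB
    obtain ⟨m, -, rfl⟩ := Finset.mem_image.1 hB
    rw [P.partFinset_toOrdered]
    exact P.pt_mem_parts m
  · intro hB
    have hmax : B.max' (P.nonempty_of_mem_parts hB) ∈ P.maxes :=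
      P.mem_maxes.2 ⟨⟨B, hB⟩, rfl⟩
    have : B.max' (P.nonempty_of_mem_parts hB) ∈
        Set.range (P.maxes.orderEmbOfFin P.card_maxes) := by
      rw [Finset.range_orderEmbOfFin]; exact hmax
    obtain ⟨m, hm⟩ := this
    have hpt : P.pt m = B := by
      apply P.part_eq_of_mem hB
      rw [hm]
      exact Finset.max'_mem _ _
    refine Finset.mem_image.2 ⟨m, Finset.mem_univ _, ?_⟩
    exact (P.partFinset_toOrdered m).trans hpt

end Finpartition

namespace OrderedFinpartition

lemma eq_of_partFinset_eq {n : ℕ} (c c' : OrderedFinpartition n)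
    (hl : c.length = c'.length)
    (h : ∀ m : Fin c.length, c.partFinset m = c'.partFinset (Fin.cast hl m)) : c = c' := by
  obtain ⟨L, sz, hpos, em, hmono, hpmono, hdis, hcov⟩ := c
  obtain ⟨L', sz', hpos', em', hmono', hpmono', hdis', hcov'⟩ := c'
  obtain rfl : L = L' := hl
  have h' : ∀ m : Fin L,
      (OrderedFinpartition.mk L sz hpos em hmono hpmono hdis hcov).partFinset m =
      (OrderedFinpartition.mk L sz' hpos' em' hmono' hpmono' hdis' hcov').partFinset m :=
    fun m => h m
  have hsz : sz = sz' := by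
    funext m
    have := congrArg Finset.card (h' m)
    rwa [card_partFinset, card_partFinset] at this
  subst hsz
  have hem : em = em' := by
    funext m
    have hc1 : (Finset.univ.image (em m)).card = sz m := by
      rw [Finset.card_image_of_injective _ (hmono m).injective, Finset.card_univ,
        Fintype.card_fin]
    have e1 : em m = (Finset.univ.image (em m)).orderEmbOfFin hc1 :=
      Finset.orderEmbOfFin_unique hc1 (fun x => Finset.mem_image_of_mem _ (Finset.mem_univ x))
        (hmono m)
    have hpf : (Finset.univ.image (em m)) = (Finset.univ.image (em' m)) := h' m
    have hc2 : (Finset.univ.image (em m)).card = sz m := hc1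
    have e2 : em' m = (Finset.univ.image (em m)).orderEmbOfFin hc1 := by
      apply Finset.orderEmbOfFin_unique hc1
      · intro x
        rw [hpf]
        exact Finset.mem_image_of_mem _ (Finset.mem_univ x)
      · exact hmono' m
    rw [e1, e2]
  subst hem
  rfl

lemma toFinp_injective {n : ℕ} : Function.Injective (toFinp : OrderedFinpartition n → _) := by
  intro c c' h
  have hl : c.length = c'.length := by
    rw [← card_parts_toFinp, ← card_parts_toFinp, h]
  apply eq_of_partFinset_eq c c' hl
  have hM : StrictMono (fun m : Fin c.length =>
      (c.partFinset m).max' (c.partFinset_nonempty m)) := by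
    intro x y hxy
    simp only [max'_partFinset]
    exact c.parts_strictMono hxy
  have hM' : StrictMono ((fun m : Fin c'.length =>
      (c'.partFinset m).max' (c'.partFinset_nonempty m)) ∘ Fin.cast hl) := by
    intro x y hxy
    simp only [Function.comp, max'_partFinset]
    exact c'.parts_strictMono (by rwa [Fin.lt_def] at hxy ⊢)
  have hparts : Finset.univ.image c.partFinset = Finset.univ.image c'.partFinset := by
    rw [← parts_toFinp, ← parts_toFinp, h]
  have hrange : Set.range (fun m : Fin c.length =>
        (c.partFinset m).max' (c.partFinset_nonempty m)) =
      Set.range ((fun m : Fin c'.length =>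
        (c'.partFinset m).max' (c'.partFinset_nonempty m)) ∘ Fin.cast hl) := by
    ext x
    constructor
    · rintro ⟨m, rfl⟩
      have hmem : c.partFinset m ∈ Finset.univ.image c'.partFinset := by
        rw [← hparts]; exact Finset.mem_image_of_mem _ (Finset.mem_univ _)
      obtain ⟨m'', -, hm''⟩ := Finset.mem_image.1 hmem
      refine ⟨Fin.cast hl.symm m'', ?_⟩
      show (c'.partFinset (Fin.cast hl (Fin.cast hl.symm m''))).max' _ = _
      have heq : c'.partFinset (Fin.cast hl (Fin.cast hl.symm m'')) = c.partFinset m := hm''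
      congr 1
    · rintro ⟨m, rfl⟩
      have hmem : c'.partFinset (Fin.cast hl m) ∈ Finset.univ.image c.partFinset := by
        rw [hparts]; exact Finset.mem_image_of_mem _ (Finset.mem_univ _)
      obtain ⟨m'', -, hm''⟩ := Finset.mem_image.1 hmem
      refine ⟨m'', ?_⟩
      simp only [Function.comp]
      congr 1
  haveI : WellFoundedLT (Fin c.length) := inferInstance
  have hMeq := (hM.range_inj hM').1 hrange
  intro m
  have hxm : (c.partFinset m).max' (c.partFinset_nonempty m) =
      (c'.partFinset (Fin.cast hl m)).max' (c'.partFinset_nonempty _) := congrFun hMeq m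
  have m1 : c.partFinset m ∈ c.toFinp.parts :=
    Finset.mem_image_of_mem _ (Finset.mem_univ _)
  have m2 : c'.partFinset (Fin.cast hl m) ∈ c.toFinp.parts := by
    rw [h]
    exact Finset.mem_image_of_mem _ (Finset.mem_univ _)
  apply c.toFinp.eq_of_mem_parts m1 m2 (Finset.max'_mem _ _)
  rw [hxm]
  exact Finset.max'_mem _ _

lemma sum_partitions_eq {n l : ℕ} (w : ℕ → ℝ) :
    ∑ c ∈ Finset.univ.filter (fun c : OrderedFinpartition n => c.length = l),
      ∏ m, w (c.partSize m) =
    ∑ P ∈ Finset.univ.filter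
        (fun P : Finpartition (Finset.univ : Finset (Fin n)) => P.parts.card = l),
      ∏ B ∈ P.parts, w B.card := by
  apply Finset.sum_bij (fun c _ => c.toFinp)
  · intro c hc
    rw [Finset.mem_filter] at *
    exact ⟨Finset.mem_univ _, by rw [card_parts_toFinp]; exact hc.2⟩
  · intro c hc c' hc' hcc'
    exact toFinp_injective hcc'
  · intro P hP
    rw [Finset.mem_filter] at hP
    exact ⟨P.toOrdered, Finset.mem_filter.2 ⟨Finset.mem_univ _,
      by rw [P.length_toOrdered]; exact hP.2⟩, P.toFinp_toOrdered⟩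
  · intro c hc
    exact (c.prod_parts_toFinp w).symm

end OrderedFinpartition

end Combinatorics

section Analysis

lemma iteratedDeriv_rpow_fun (p : ℝ) (l : ℕ) : ∀ y : ℝ, 0 < y →
    iteratedDeriv l (fun z : ℝ => z ^ p) y =
      (∏ j ∈ Finset.range l, (p - j)) * y ^ (p - l) := by
  induction l with
  | zero => intro y hy; simp
  | succ l ih =>
    intro y hy
    rw [iteratedDeriv_succ]
    have hev : iteratedDeriv l (fun z : ℝ => z ^ p) =ᶠ[nhds y]
        fun z => (∏ j ∈ Finset.range l, (p - j)) * z ^ (p - l) := by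
      filter_upwards [isOpen_Ioi.mem_nhds hy] with z hz
      exact ih z hz
    rw [hev.deriv_eq, deriv_const_mul _ (Real.differentiableAt_rpow_const_of_ne _ hy.ne'),
      Real.deriv_rpow_const y (p - l), Finset.prod_range_succ]
    push_cast
    rw [show p - (↑l + 1) = p - ↑l - 1 by ring]
    ring

lemma hasDerivAt_one_sub_rpow (q : ℝ) {x : ℝ} (hx : x < 1) :
    HasDerivAt (fun z : ℝ => (1 - z) ^ q) (-(q * (1 - x) ^ (q - 1))) x := by
  have h1 : HasDerivAt (fun z : ℝ => 1 - z) (-1) x := by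
    simpa using (hasDerivAt_id x).const_sub 1
  have := h1.rpow_const (p := q) (Or.inl (by simpa using sub_ne_zero.2 hx.ne'))
  convert this using 1
  ring

lemma iteratedDeriv_one_sub_rpow (a Kt : ℝ) (k : ℕ) (hk : 1 ≤ k) : ∀ x : ℝ, x < 1 →
    iteratedDeriv k (fun z : ℝ => (1 - z) ^ (a - 1) + Kt) x =
      (ascPochhammer ℝ k).eval (1 - a) * (1 - x) ^ (a - 1 - k) := by
  induction k with
  | zero => omega
  | succ k ih =>
    rcases Nat.eq_zero_or_pos k with rfl | hk'
    · intro x hx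
      rw [iteratedDeriv_one]
      have hd : HasDerivAt (fun z : ℝ => (1 - z) ^ (a - 1) + Kt)
          (-((a - 1) * (1 - x) ^ (a - 1 - 1))) x :=
        (hasDerivAt_one_sub_rpow (a - 1) hx).add_const Kt
      rw [hd.deriv]
      simp only [zero_add, ascPochhammer_one, Polynomial.eval_X]
      push_cast
      ring
    · intro x hx
      rw [iteratedDeriv_succ]
      have hev : iteratedDeriv k (fun z : ℝ => (1 - z) ^ (a - 1) + Kt) =ᶠ[nhds x]
          fun z => (ascPochhammer ℝ k).eval (1 - a) * (1 - z) ^ (a - 1 - k) := by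
        filter_upwards [isOpen_Iio.mem_nhds hx] with z hz
        exact ih hk' z hz
      rw [hev.deriv_eq]
      have hd : HasDerivAt (fun z : ℝ => (ascPochhammer ℝ k).eval (1 - a) *
          (1 - z) ^ (a - 1 - k))
          ((ascPochhammer ℝ k).eval (1 - a) * -((a - 1 - k) * (1 - x) ^ (a - 1 - k - 1))) x :=
        (hasDerivAt_one_sub_rpow (a - 1 - k) hx).const_mul _
      rw [hd.deriv, ascPochhammer_succ_eval]
      push_cast
      rw [show a - 1 - (↑k + 1) = a - 1 - ↑k - 1 by ring]
      ring

lemma faa_sum (a Kt : ℝ) (ha1 : a < 1) (hKt : 0 ≤ Kt) (i : ℕ) :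
    iteratedDeriv i (fun x : ℝ => ((1 - x) ^ (a - 1) + Kt) ^ (1 / (a - 1))) 0 =
      ∑ c : OrderedFinpartition i,
        (∏ m, (ascPochhammer ℝ (c.partSize m)).eval (1 - a)) *
          ((∏ j ∈ Finset.range c.length, (1 / (a - 1) - j)) *
            (1 + Kt) ^ (1 / (a - 1) - c.length)) := by
  classical
  set r : ℝ := 1 / (a - 1) with hr_def
  set g : ℝ → ℝ := fun x => (1 - x) ^ (a - 1) + Kt with hg_def
  set h : ℝ → ℝ := fun y => y ^ r with hh_def
  have hs : IsOpen (Set.Iio (1:ℝ)) := isOpen_Iio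
  have hT : IsOpen (Set.Ioi (0:ℝ)) := isOpen_Ioi
  have hgpos : ∀ x ∈ Set.Iio (1:ℝ), 0 < g x := by
    intro x hx
    have h1 : (0:ℝ) < 1 - x := by simp only [Set.mem_Iio] at hx; linarith
    have : (0:ℝ) < (1 - x) ^ (a - 1) := Real.rpow_pos_of_pos h1 _
    simp only [hg_def]
    linarith
  have hg0 : g 0 = 1 + Kt := by simp [hg_def, Real.one_rpow]
  have hg : ContDiffOn ℝ (⊤ : ℕ∞) g (Set.Iio 1) := by
    apply ContDiffOn.add _ contDiffOn_const
    apply ContDiffOn.rpow_const_of_ne (contDiffOn_const.sub contDiffOn_id)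
    intro x hx
    have h1 : (0:ℝ) < 1 - x := by simp only [Set.mem_Iio] at hx; linarith
    exact h1.ne'
  have hh : ContDiffOn ℝ (⊤ : ℕ∞) h (Set.Ioi 0) :=
    ContDiffOn.rpow_const_of_ne contDiffOn_id (fun y hy => (Set.mem_Ioi.1 hy).ne')
  have hmaps : Set.MapsTo g (Set.Iio 1) (Set.Ioi 0) := fun x hx => hgpos x hx
  have hgt := hg.ftaylorSeriesWithin hs.uniqueDiffOn
  have hht := hh.ftaylorSeriesWithin hT.uniqueDiffOn
  have hcomp := hht.comp hgt hmaps
  have h0 : (0:ℝ) ∈ Set.Iio (1:ℝ) := by norm_num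
  have key := hcomp.eq_iteratedFDerivWithin_of_uniqueDiffOn (by exact_mod_cast le_top) hs.uniqueDiffOn h0 (m := i)
  have hterm : ∀ c : OrderedFinpartition i,
      ((ftaylorSeriesWithin ℝ h (Set.Ioi 0) (g 0)).compAlongOrderedFinpartition
        (ftaylorSeriesWithin ℝ g (Set.Iio 1) 0) c) (fun _ => 1) =
      (∏ m, (ascPochhammer ℝ (c.partSize m)).eval (1 - a)) *
        ((∏ j ∈ Finset.range c.length, (r - j)) * (1 + Kt) ^ (r - c.length)) := by
    intro c
    rw [FormalMultilinearSeries.compAlongOrderedFinpartition_apply]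
    have happ : c.applyOrderedFinpartition
        (fun m => (ftaylorSeriesWithin ℝ g (Set.Iio 1) 0 (c.partSize m)))
        (fun _ => (1:ℝ)) = fun m => iteratedDeriv (c.partSize m) g 0 := by
      funext m
      rw [OrderedFinpartition.applyOrderedFinpartition_apply]
      show iteratedFDerivWithin ℝ (c.partSize m) g (Set.Iio 1) 0 _ = _
      rw [iteratedFDerivWithin_of_isOpen _ hs h0, iteratedDeriv_eq_iteratedFDeriv]
      rfl
    rw [happ]
    have hsmul : (fun m => iteratedDeriv (c.partSize m) g 0) =
        fun m => (iteratedDeriv (c.partSize m) g 0) • (1:ℝ) := by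
      funext m; rw [smul_eq_mul, mul_one]
    rw [hsmul, ContinuousMultilinearMap.map_smul_univ]
    have hq1 : (ftaylorSeriesWithin ℝ h (Set.Ioi 0) (g 0) c.length) (fun _ => (1:ℝ)) =
        iteratedDeriv c.length h (g 0) := by
      show iteratedFDerivWithin ℝ c.length h (Set.Ioi 0) (g 0) _ = _
      rw [iteratedFDerivWithin_of_isOpen _ hT (hgpos 0 h0), iteratedDeriv_eq_iteratedFDeriv]
    rw [smul_eq_mul, hq1]
    have hgd : ∀ m : Fin c.length, iteratedDeriv (c.partSize m) g 0 =
        (ascPochhammer ℝ (c.partSize m)).eval (1 - a) := by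
      intro m
      rw [hg_def, iteratedDeriv_one_sub_rpow a Kt _ (c.partSize_pos m) 0 (by norm_num),
        sub_zero, Real.one_rpow, mul_one]
    have hhd : iteratedDeriv c.length h (g 0) =
        (∏ j ∈ Finset.range c.length, (r - j)) * (1 + Kt) ^ (r - c.length) := by
      rw [hh_def, iteratedDeriv_rpow_fun r c.length (g 0) (hgpos 0 h0), hg0]
    rw [hhd]
    congr 1
    exact Finset.prod_congr rfl fun m _ => hgd m
  calc iteratedDeriv i (fun x : ℝ => ((1 - x) ^ (a - 1) + Kt) ^ r) 0
      = iteratedFDeriv ℝ i (h ∘ g) 0 (fun _ => 1) := by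
        rw [← iteratedDeriv_eq_iteratedFDeriv]; rfl
    _ = iteratedFDerivWithin ℝ i (h ∘ g) (Set.Iio 1) 0 (fun _ => 1) := by
        rw [iteratedFDerivWithin_of_isOpen i hs h0]
    _ = ((ftaylorSeriesWithin ℝ h (Set.Ioi 0) (g 0)).taylorComp
          (ftaylorSeriesWithin ℝ g (Set.Iio 1) 0) i) (fun _ => 1) := by rw [key]
    _ = ∑ c : OrderedFinpartition i,
          ((ftaylorSeriesWithin ℝ h (Set.Ioi 0) (g 0)).compAlongOrderedFinpartition
            (ftaylorSeriesWithin ℝ g (Set.Iio 1) 0) c) (fun _ => 1) := by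
        rw [FormalMultilinearSeries.taylorComp, ContinuousMultilinearMap.sum_apply]
    _ = _ := Finset.sum_congr rfl fun c _ => hterm c

lemma asc_eval_prod (x : ℝ) (l : ℕ) :
    (ascPochhammer ℝ l).eval x = ∏ j ∈ Finset.range l, (x + j) := by
  induction l with
  | zero => simp [ascPochhammer]
  | succ l ih => rw [ascPochhammer_succ_eval, Finset.prod_range_succ, ih]

lemma regroup_sum (a : ℝ) (i : ℕ) (hi : 1 ≤ i) (F : ℕ → ℝ) :
    ∑ c : OrderedFinpartition i,
      (∏ m, (ascPochhammer ℝ (c.partSize m)).eval (1 - a)) * F c.length =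
    ∑ l ∈ Finset.Icc 1 i,
      (∑ P ∈ Finset.univ.filter
          (fun P : Finpartition (Finset.univ : Finset (Fin i)) => P.parts.card = l),
        ∏ B ∈ P.parts, (ascPochhammer ℝ B.card).eval (1 - a)) * F l := by
  classical
  have hmap : ∀ c ∈ (Finset.univ : Finset (OrderedFinpartition i)),
      c.length ∈ Finset.Icc 1 i := by
    intro c _
    rw [Finset.mem_Icc]
    exact ⟨c.length_pos (by omega), c.length_le⟩
  rw [← Finset.sum_fiberwise_of_maps_to hmap]
  apply Finset.sum_congr rfl
  intro l _
  have : ∀ c ∈ Finset.univ.filter (fun c : OrderedFinpartition i => c.length = l),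
      (∏ m, (ascPochhammer ℝ (c.partSize m)).eval (1 - a)) * F c.length =
      (∏ m, (ascPochhammer ℝ (c.partSize m)).eval (1 - a)) * F l := by
    intro c hc
    exact congrArg (fun z => (∏ m, (ascPochhammer ℝ (c.partSize m)).eval (1 - a)) * F z)
      (Finset.mem_filter.1 hc).2
  rw [Finset.sum_congr rfl this, ← Finset.sum_mul,
    OrderedFinpartition.sum_partitions_eq (fun k => (ascPochhammer ℝ k).eval (1 - a))]

end Analysis

/-- for `0 < a < 1`, `b > 0`, `K = Γ(a+b)/((2-a)Γ(b))`, `t ≥ 0`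
and `c = (1+Kt)^{1/(a-1)}`, the `i`-th derivative at `x = 0` of
`x ↦ ((1-x)^{a-1} + Kt)^{1/(a-1)}` equals
`-c^{2-a} ∑_{l=1}^i (1/(1-a))^{(l)} (-c^{1-a})^{l-1} ∑_{π∈P(i,l)} ∏_{B∈π} (1-a)^{(|B|)}`,
and hence `c_i(t) = -(1/i!)·(d/dx)^i|₀` equals
`(c^{2-a}/i!) ∑_{l=1}^i (1/(1-a))^{(l)} (-c^{1-a})^{l-1} ∑_{π∈P(i,l)} ∏_{B∈π} (1-a)^{(|B|)}`. -/
theorem stmt_17 (a b : ℝ) (ha0 : 0 < a) (ha1 : a < 1) (hb : 0 < b)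
    (K : ℝ) (hK : K = Real.Gamma (a + b) / ((2 - a) * Real.Gamma b))
    (t : ℝ) (ht : 0 ≤ t)
    (c : ℝ) (hc : c = (1 + K * t) ^ (1 / (a - 1)))
    (i : ℕ) (hi : 1 ≤ i) :
    (iteratedDeriv i (fun x : ℝ => ((1 - x) ^ (a - 1) + K * t) ^ (1 / (a - 1))) 0 =
      -c ^ (2 - a) *
        ∑ l ∈ Finset.Icc 1 i,
          (ascPochhammer ℝ l).eval (1 / (1 - a)) * (-c ^ (1 - a)) ^ (l - 1) *
            ∑ P ∈ Finset.univ.filter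
                (fun P : Finpartition (Finset.univ : Finset (Fin i)) => P.parts.card = l),
              ∏ B ∈ P.parts, (ascPochhammer ℝ B.card).eval (1 - a)) ∧
    (-(1 / ((Nat.factorial i : ℕ) : ℝ)) *
        iteratedDeriv i (fun x : ℝ => ((1 - x) ^ (a - 1) + K * t) ^ (1 / (a - 1))) 0 =
      c ^ (2 - a) / ((Nat.factorial i : ℕ) : ℝ) *
        ∑ l ∈ Finset.Icc 1 i,
          (ascPochhammer ℝ l).eval (1 / (1 - a)) * (-c ^ (1 - a)) ^ (l - 1) *
            ∑ P ∈ Finset.univ.filter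
                (fun P : Finpartition (Finset.univ : Finset (Fin i)) => P.parts.card = l),
              ∏ B ∈ P.parts, (ascPochhammer ℝ B.card).eval (1 - a)) := by
  classical
  have hane : a - 1 ≠ 0 := by intro h; linarith
  have hKpos : 0 < K := by
    rw [hK]
    apply div_pos (Real.Gamma_pos_of_pos (by linarith))
    exact mul_pos (by linarith) (Real.Gamma_pos_of_pos hb)
  have hKt : 0 ≤ K * t := mul_nonneg hKpos.le ht
  have hy0 : (0:ℝ) < 1 + K * t := by linarith
  have hcpos : 0 < c := by rw [hc]; exact Real.rpow_pos_of_pos hy0 _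
  have hr : 1 / (a - 1) = -(1 / (1 - a)) := by
    rw [show a - 1 = -(1 - a) by ring, div_neg]
  have hmain : iteratedDeriv i (fun x : ℝ => ((1 - x) ^ (a - 1) + K * t) ^ (1 / (a - 1))) 0 =
      -c ^ (2 - a) *
        ∑ l ∈ Finset.Icc 1 i,
          (ascPochhammer ℝ l).eval (1 / (1 - a)) * (-c ^ (1 - a)) ^ (l - 1) *
            ∑ P ∈ Finset.univ.filter
                (fun P : Finpartition (Finset.univ : Finset (Fin i)) => P.parts.card = l),
              ∏ B ∈ P.parts, (ascPochhammer ℝ B.card).eval (1 - a) := by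
    rw [faa_sum a (K * t) ha1 hKt i,
      regroup_sum a i hi (fun l => (∏ j ∈ Finset.range l, (1 / (a - 1) - j)) *
        (1 + K * t) ^ (1 / (a - 1) - l)), Finset.mul_sum]
    apply Finset.sum_congr rfl
    intro l hl
    obtain ⟨hl1, hli⟩ := Finset.mem_Icc.1 hl
    obtain ⟨l', rfl⟩ : ∃ l', l = l' + 1 := ⟨l - 1, by omega⟩
    have hprod : (∏ j ∈ Finset.range (l' + 1), (1 / (a - 1) - j)) =
        (-1) ^ (l' + 1) * (ascPochhammer ℝ (l' + 1)).eval (1 / (1 - a)) := by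
      rw [asc_eval_prod]
      rw [show (∏ j ∈ Finset.range (l' + 1), (1 / (a - 1) - (j:ℝ))) =
          ∏ j ∈ Finset.range (l' + 1), (-1) * (1 / (1 - a) + j) from
          Finset.prod_congr rfl fun j _ => by rw [hr]; ring]
      rw [Finset.prod_mul_distrib, Finset.prod_const, Finset.card_range]
    have hrpow : (1 + K * t) ^ (1 / (a - 1) - ((l' + 1 : ℕ) : ℝ)) =
        c ^ (2 - a) * (c ^ (1 - a)) ^ l' := by
      have e1 : c ^ (2 - a) = (1 + K * t) ^ ((1 / (a - 1)) * (2 - a)) := by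
        rw [hc, ← Real.rpow_mul hy0.le]
      have e2 : (c ^ (1 - a) : ℝ) ^ l' = (1 + K * t) ^ ((1 / (a - 1)) * ((1 - a) * l')) := by
        rw [hc, ← Real.rpow_mul hy0.le, ← Real.rpow_natCast ((1 + K * t) ^ ((1 / (a - 1)) * (1 - a))) l', ← Real.rpow_mul hy0.le]
        ring_nf
      rw [e1, e2, ← Real.rpow_add hy0]
      congr 1
      push_cast
      field_simp
      ring
    simp only [Nat.add_sub_cancel]
    rw [hprod, hrpow]
    ring
  constructor
  · exact hmain
  · rw [hmain]; ring
end

section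
/- For every real number c and every integer i ≥ 1 one has ∑_{l=1}^{i} l! · (-c)^{l-1} · ∑_{π ∈ P(i,l)} ∏_{B ∈ π} (|B|)! = i! · (1-c)^{i-1}. (Equivalently, the complete Bell polynomial B_i evaluated at v_k = k!(-c)^{k-1} and w_k = k! equals i!(1-c)^{i-1}, which yields the Kingman limiting block size frequencies c_i(t) = c(t)²(1-c(t))^{i-1} in the limit a → 0.) -/
open Finset

namespace Stmt18Aux

open OrderedFinpartition

/-- weight of an ordered finpartition: product of factorials of part sizes -/
noncomputable def W {n : ℕ} (c : OrderedFinpartition n) : ℕ :=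
  ∏ m, Nat.factorial (c.partSize m)

noncomputable def S (n l : ℕ) : ℕ :=
  ∑ c : OrderedFinpartition n, if c.length = l then W c else 0

lemma sum_partSize {n : ℕ} (c : OrderedFinpartition n) :
    ∑ m, c.partSize m = n := by
  have := c.sum_sigma_eq_sum (fun _ => (1 : ℕ))
  simpa using this

lemma W_extendLeft {n : ℕ} (c : OrderedFinpartition n) :
    W c.extendLeft = W c := by
  simp [W, OrderedFinpartition.extendLeft, Fin.prod_univ_succ]
  exact (Fin.prod_univ_succ (fun m : Fin (c.length + 1) =>
    (Fin.cons (α := fun _ => ℕ) 1 c.partSize m).factorial)).trans (by simp)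

lemma W_extendMiddle {n : ℕ} (c : OrderedFinpartition n) (k : Fin c.length) :
    W (c.extendMiddle k) = (c.partSize k + 1) * W c := by
  have h : (fun m => Nat.factorial ((Function.update c.partSize k (c.partSize k + 1)) m))
      = Function.update (fun m => Nat.factorial (c.partSize m)) k
          (Nat.factorial (c.partSize k + 1)) := by
    ext m
    rcases eq_or_ne m k with rfl | hm
    · simp
    · simp [Function.update_of_ne hm]
  show (∏ m, Nat.factorial ((Function.update c.partSize k (c.partSize k + 1)) m)) = _
  rw [show (∏ m, Nat.factorial ((Function.update c.partSize k (c.partSize k + 1)) m))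
      = ∏ m, (Function.update (fun m => Nat.factorial (c.partSize m)) k
          (Nat.factorial (c.partSize k + 1))) m from by rw [h]]
  rw [Finset.prod_update_of_mem (Finset.mem_univ k)]
  rw [Nat.factorial_succ]
  rw [Finset.sdiff_singleton_eq_erase, mul_assoc]
  congr 1
  rw [mul_comm]
  rw [Finset.prod_erase_mul _ _ (Finset.mem_univ k)]
  rfl

lemma length_extendLeft {n : ℕ} (c : OrderedFinpartition n) :
    c.extendLeft.length = c.length + 1 := rfl

lemma length_extendMiddle {n : ℕ} (c : OrderedFinpartition n) (k : Fin c.length) :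
    (c.extendMiddle k).length = c.length := rfl

lemma S_zero (l : ℕ) : S 0 l = if 0 = l then 1 else 0 := by
  rw [S, Fintype.sum_unique]
  have h1 : (default : OrderedFinpartition 0).length = 0 := by
    have := (default : OrderedFinpartition 0).length_le
    omega
  have h2 : W (default : OrderedFinpartition 0) = 1 := by
    rw [W]
    apply Finset.prod_eq_one
    intro m _
    exfalso
    have h := m.isLt
    omega
  rw [h1, h2]

lemma S_pos_zero {n : ℕ} (hn : 1 ≤ n) : S n 0 = 0 := by
  rw [S]
  apply Finset.sum_eq_zero
  intro c _
  have h := c.length_pos hn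
  simp only [if_neg (by omega : ¬ c.length = 0)]

lemma S_succ (n l : ℕ) : S (n + 1) (l + 1) = S n l + (n + (l + 1)) * S n (l + 1) := by
  classical
  have h0 : S (n + 1) (l + 1)
      = ∑ p : (c : OrderedFinpartition n) × Option (Fin c.length),
          (if (extendEquiv n p).length = l + 1 then W (extendEquiv n p) else 0) := by
    rw [S]
    exact (Fintype.sum_equiv (extendEquiv n) _ _ (fun p => rfl)).symm
  rw [h0, ← Finset.univ_sigma_univ, Finset.sum_sigma]
  have hterm : ∀ c : OrderedFinpartition n,
      (∑ o : Option (Fin c.length),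
        (if (extendEquiv n ⟨c, o⟩).length = l + 1 then W (extendEquiv n ⟨c, o⟩) else 0))
      = (if c.length = l then W c else 0)
        + (if c.length = l + 1 then (n + (l + 1)) * W c else 0) := by
    intro c
    rw [Fintype.sum_option]
    have hnone : (extendEquiv n ⟨c, none⟩) = c.extendLeft := rfl
    have hsome : ∀ k, (extendEquiv n ⟨c, some k⟩) = c.extendMiddle k := fun _ => rfl
    rw [hnone]
    simp only [hsome]
    congr 1
    · rw [length_extendLeft, W_extendLeft]
      simp [Nat.add_right_cancel_iff]
    · simp only [length_extendMiddle, W_extendMiddle]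
      rcases eq_or_ne c.length (l + 1) with h | h
      · simp only [h, if_true]
        rw [← Finset.sum_mul, Finset.sum_add_distrib, sum_partSize]
        simp [h, mul_comm]
      · simp [h]
  rw [Finset.sum_congr rfl (fun c _ => hterm c), Finset.sum_add_distrib]
  have hA : (∑ c : OrderedFinpartition n, if c.length = l then W c else 0) = S n l := rfl
  have hB : (∑ c : OrderedFinpartition n, if c.length = l + 1 then (n + (l + 1)) * W c else 0)
      = (n + (l + 1)) * S n (l + 1) := by
    rw [S, Finset.mul_sum]
    apply Finset.sum_congr rfl
    intro c _
    split <;> simp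
  rw [hA, hB]

lemma key (m l : ℕ) :
    Nat.factorial (l + 1) * S (m + 1) (l + 1)
      = Nat.factorial (m + 1) * Nat.choose m l := by
  induction m generalizing l with
  | zero =>
    rw [S_succ, S_zero, S_zero]
    cases l with
    | zero => simp
    | succ k => simp [Nat.choose_eq_zero_of_lt (by omega : (0:ℕ) < k + 1)]
  | succ m ih =>
    rw [S_succ]
    rw [Nat.mul_add]
    cases l with
    | zero =>
      rw [S_pos_zero (by omega)]
      have := ih 0
      simp only [Nat.choose_zero_right, mul_one] at this ⊢
      rw [mul_comm (m + 1 + (0 + 1)) (S (m + 1) (0 + 1))]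
      rw [← mul_assoc, mul_comm (Nat.factorial (0+1)) (S (m+1) (0+1))]
      have h1 : Nat.factorial (0 + 1) * S (m + 1) (0 + 1) = Nat.factorial (m + 1) := by
        simpa using ih 0
      calc Nat.factorial (0 + 1) * 0 + S (m + 1) (0 + 1) * Nat.factorial (0 + 1) * (m + 1 + (0 + 1))
          = (Nat.factorial (0 + 1) * S (m + 1) (0 + 1)) * (m + 2) := by ring
        _ = Nat.factorial (m + 1) * (m + 2) := by rw [h1]
        _ = Nat.factorial (m + 1 + 1) := by rw [Nat.factorial_succ (m+1)]; ring
    | succ k =>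
      have ih1 : Nat.factorial (k + 1) * S (m + 1) (k + 1)
          = Nat.factorial (m + 1) * Nat.choose m k := ih k
      have ih2 : Nat.factorial (k + 2) * S (m + 1) (k + 2)
          = Nat.factorial (m + 1) * Nat.choose m (k + 1) := ih (k + 1)
      have hfac : Nat.factorial (k + 2) = (k + 2) * Nat.factorial (k + 1) := rfl
      have e1 : Nat.factorial (k + 1 + 1) * S (m + 1) (k + 1)
          = (k + 2) * (Nat.factorial (m + 1) * Nat.choose m k) := by
        rw [show k + 1 + 1 = k + 2 from rfl, hfac, mul_assoc, ih1]
      have e2 : Nat.factorial (k + 1 + 1) * ((m + 1 + (k + 1 + 1)) * S (m + 1) (k + 1 + 1))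
          = (m + k + 3) * (Nat.factorial (m + 1) * Nat.choose m (k + 1)) := by
        rw [show k + 1 + 1 = k + 2 from rfl,
          show Nat.factorial (k + 2) * ((m + 1 + (k + 2)) * S (m + 1) (k + 2))
            = (m + 1 + (k + 2)) * (Nat.factorial (k + 2) * S (m + 1) (k + 2)) from by ring, ih2]
        ring_nf
      rw [e1, e2]
      have hgoal : (k + 2) * Nat.choose m k + (m + k + 3) * Nat.choose m (k + 1)
          = (m + 2) * (Nat.choose m k + Nat.choose m (k + 1)) := by
        rcases le_or_gt k m with hk | hk
        · have h := Nat.choose_succ_right_eq m k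
          zify [hk] at h ⊢
          linear_combination h
        · rw [Nat.choose_eq_zero_of_lt hk, Nat.choose_eq_zero_of_lt (by omega)]
          ring
      have hch : Nat.choose (m + 1) (k + 1) = Nat.choose m k + Nat.choose m (k + 1) :=
        Nat.choose_succ_succ m k
      calc (k + 2) * (Nat.factorial (m + 1) * Nat.choose m k)
            + (m + k + 3) * (Nat.factorial (m + 1) * Nat.choose m (k + 1))
          = Nat.factorial (m + 1) * ((k + 2) * Nat.choose m k
              + (m + k + 3) * Nat.choose m (k + 1)) := by ring
        _ = Nat.factorial (m + 1) * ((m + 2) * (Nat.choose m k + Nat.choose m (k + 1))) := by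
            rw [hgoal]
        _ = Nat.factorial (m + 1 + 1) * Nat.choose (m + 1) (k + 1) := by
            rw [hch, Nat.factorial_succ (m + 1)]; ring


/-! ### Part 2: bijection with Finpartition -/

lemma max'_congr' {α : Type*} [LinearOrder α] {s t : Finset α}
    (hst : s = t) (hs : s.Nonempty) (ht : t.Nonempty) : s.max' hs = t.max' ht := by
  subst hst
  rfl

lemma orderEmbOfFin_congr {α : Type*} [LinearOrder α] {s t : Finset α} {k : ℕ}
    (hst : s = t) (hs : s.card = k) (ht : t.card = k) :
    ⇑(s.orderEmbOfFin hs) = ⇑(t.orderEmbOfFin ht) := by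
  subst hst
  rfl

variable {n : ℕ}

/-- the `m`-th part of an ordered finpartition, as a `Finset`. -/
noncomputable def img (c : OrderedFinpartition n) (m : Fin c.length) : Finset (Fin n) :=
  Finset.image (c.emb m) Finset.univ

lemma coe_img (c : OrderedFinpartition n) (m : Fin c.length) :
    (img c m : Set (Fin n)) = Set.range (c.emb m) := by
  simp [img]

lemma img_card (c : OrderedFinpartition n) (m : Fin c.length) :
    (img c m).card = c.partSize m := by
  rw [img, Finset.card_image_of_injective _ (c.emb_strictMono m).injective, Finset.card_univ,
    Fintype.card_fin]

lemma img_nonempty (c : OrderedFinpartition n) (m : Fin c.length) :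
    (img c m).Nonempty := by
  refine ⟨c.emb m ⟨0, c.partSize_pos m⟩, ?_⟩
  exact Finset.mem_image_of_mem _ (Finset.mem_univ _)

lemma img_disjoint (c : OrderedFinpartition n) {m m' : Fin c.length} (h : m ≠ m') :
    Disjoint (img c m) (img c m') := by
  rw [← Finset.disjoint_coe, coe_img, coe_img]
  exact c.disjoint (Set.mem_univ m) (Set.mem_univ m') h

lemma img_injective (c : OrderedFinpartition n) : Function.Injective (img c) := by
  intro m m' h
  by_contra hne
  have hd := img_disjoint c hne
  rw [h, disjoint_self] at hd
  exact (img_nonempty c m').ne_empty (by simpa using hd)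

lemma mem_img_self (c : OrderedFinpartition n) (x : Fin n) :
    x ∈ img c (c.index x) := by
  rw [img, Finset.mem_image]
  exact ⟨c.invEmbedding x, Finset.mem_univ _, c.emb_invEmbedding x⟩

/-- the canonical map from ordered finpartitions to finpartitions of `univ : Finset (Fin n)` -/
noncomputable def toFP (c : OrderedFinpartition n) : Finpartition (Finset.univ : Finset (Fin n)) where
  parts := Finset.image (img c) Finset.univ
  supIndep := by
    rw [Finset.supIndep_iff_pairwiseDisjoint]
    intro B hB B' hB' hne
    simp only [Finset.coe_image, Finset.coe_univ, Set.image_univ, Set.mem_range] at hB hB'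
    obtain ⟨m, rfl⟩ := hB
    obtain ⟨m', rfl⟩ := hB'
    exact img_disjoint c (fun hmm => hne (by rw [hmm]))
  sup_parts := by
    ext x
    simp only [Finset.mem_sup, Finset.mem_image, Finset.mem_univ, true_and, id, iff_true]
    exact ⟨img c (c.index x), ⟨c.index x, rfl⟩, mem_img_self c x⟩
  bot_notMem := by
    simp only [bot_eq_empty, Finset.mem_image, Finset.mem_univ, true_and]
    rintro ⟨m, hm⟩
    exact (img_nonempty c m).ne_empty hm

lemma toFP_parts (c : OrderedFinpartition n) :
    (toFP c).parts = Finset.image (img c) Finset.univ := rfl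

lemma mem_toFP_parts {c : OrderedFinpartition n} {B : Finset (Fin n)} :
    B ∈ (toFP c).parts ↔ ∃ m, img c m = B := by
  simp [toFP_parts]

lemma toFP_parts_card (c : OrderedFinpartition n) :
    (toFP c).parts.card = c.length := by
  rw [toFP_parts, Finset.card_image_of_injective _ (img_injective c), Finset.card_univ,
    Fintype.card_fin]

lemma toFP_weight (c : OrderedFinpartition n) :
    ∏ B ∈ (toFP c).parts, Nat.factorial B.card = W c := by
  rw [toFP_parts, Finset.prod_image (fun m _ m' _ h => img_injective c h)]
  exact Finset.prod_congr rfl (fun m _ => by rw [img_card])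

/-- the last element map of an ordered finpartition -/
noncomputable def maxApp (c : OrderedFinpartition n) (m : Fin c.length) : Fin n :=
  c.emb m ⟨c.partSize m - 1, Nat.sub_one_lt_of_lt (c.partSize_pos m)⟩

lemma maxApp_strictMono (c : OrderedFinpartition n) : StrictMono (maxApp c) :=
  c.parts_strictMono

lemma emb_eq_orderEmbOfFin (c : OrderedFinpartition n) (m : Fin c.length) :
    c.emb m = ⇑((img c m).orderEmbOfFin (img_card c m)) :=
  Finset.orderEmbOfFin_unique (img_card c m)
    (fun x => Finset.mem_image_of_mem _ (Finset.mem_univ x)) (c.emb_strictMono m)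

lemma maxApp_eq_max' (c : OrderedFinpartition n) (m : Fin c.length) :
    maxApp c m = (img c m).max' (img_nonempty c m) := by
  rw [maxApp, emb_eq_orderEmbOfFin]
  exact Finset.orderEmbOfFin_last (img_card c m) (c.partSize_pos m)

lemma ext_of_img {c c' : OrderedFinpartition n} (hlen : c.length = c'.length)
    (h : ∀ m, img c m = img c' (Fin.cast hlen m)) : c = c' := by
  have hps : ∀ m, c.partSize m = c'.partSize (Fin.cast hlen m) := fun m => by
    rw [← img_card, ← img_card, h]
  have hembc := emb_eq_orderEmbOfFin c
  have hembc' := emb_eq_orderEmbOfFin c'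
  obtain ⟨L, ps, pp, e, es, pm, dj, cov⟩ := c
  obtain ⟨L', ps', pp', e', es', pm', dj', cov'⟩ := c'
  simp only at hlen
  subst hlen
  have hps' : ps = ps' := funext fun m => hps m
  subst hps'
  have he : e = e' := by
    funext m
    have himg : img ⟨L, ps, pp, e, es, pm, dj, cov⟩ m
        = img ⟨L, ps, pp', e', es', pm', dj', cov'⟩ m := h m
    exact (hembc m).trans ((orderEmbOfFin_congr himg _ _).trans (hembc' m).symm)
  subst he
  rfl

lemma toFP_injective : Function.Injective (toFP (n := n)) := by
  intro c c' h
  have hparts : Finset.image (img c) Finset.univ = Finset.image (img c') Finset.univ :=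
    congrArg Finpartition.parts h
  have hlen : c.length = c'.length := by
    have h2 := congrArg Finset.card hparts
    rwa [Finset.card_image_of_injective _ (img_injective c),
      Finset.card_image_of_injective _ (img_injective c'), Finset.card_univ, Finset.card_univ,
      Fintype.card_fin, Fintype.card_fin] at h2
  -- any part of c is a part of c' and conversely
  have hpart : ∀ m : Fin c.length, ∃ m', img c' m' = img c m := by
    intro m
    have : img c m ∈ Finset.image (img c') Finset.univ := by
      rw [← hparts]
      exact Finset.mem_image_of_mem _ (Finset.mem_univ m)
    simp only [Finset.mem_image, Finset.mem_univ, true_and] at this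
    exact this
  have hpart' : ∀ m' : Fin c'.length, ∃ m, img c m = img c' m' := by
    intro m'
    have : img c' m' ∈ Finset.image (img c) Finset.univ := by
      rw [hparts]
      exact Finset.mem_image_of_mem _ (Finset.mem_univ m')
    simp only [Finset.mem_image, Finset.mem_univ, true_and] at this
    exact this
  -- the max functions agree
  set M : Finset (Fin n) := Finset.image (maxApp c) Finset.univ with hM
  have hMcard : M.card = c.length := by
    rw [hM, Finset.card_image_of_injective _ (maxApp_strictMono c).injective, Finset.card_univ,
      Fintype.card_fin]
  have h1 : maxApp c = ⇑(M.orderEmbOfFin hMcard) :=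
    Finset.orderEmbOfFin_unique hMcard (fun x => Finset.mem_image_of_mem _ (Finset.mem_univ x))
      (maxApp_strictMono c)
  have h2 : (fun m => maxApp c' (Fin.cast hlen m)) = ⇑(M.orderEmbOfFin hMcard) := by
    apply Finset.orderEmbOfFin_unique hMcard
    · intro m
      obtain ⟨m₀, hm₀⟩ := hpart' (Fin.cast hlen m)
      have : maxApp c' (Fin.cast hlen m) = maxApp c m₀ := by
        rw [maxApp_eq_max', maxApp_eq_max']
        exact (max'_congr' hm₀ _ _).symm
      rw [this, hM]
      exact Finset.mem_image_of_mem _ (Finset.mem_univ m₀)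
    · intro a b hab
      refine (maxApp_strictMono c') ?_
      simp only [Fin.lt_def, Fin.coe_cast]
      exact hab
  have hmax : ∀ m, maxApp c m = maxApp c' (Fin.cast hlen m) := fun m =>
    (congrFun h1 m).trans (congrFun h2 m).symm
  apply ext_of_img hlen
  intro m
  obtain ⟨m', hm'⟩ := hpart m
  have hmm : maxApp c' m' = maxApp c' (Fin.cast hlen m) := by
    rw [← hmax m, maxApp_eq_max', maxApp_eq_max']
    exact max'_congr' hm' _ _
  have : m' = Fin.cast hlen m := (maxApp_strictMono c').injective hmm
  rw [← hm', this]

/-! ### the inverse construction -/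

/-- the finset of maxima of the parts of a finpartition -/
noncomputable def maxSet (P : Finpartition (Finset.univ : Finset (Fin n))) : Finset (Fin n) :=
  P.parts.attach.image (fun B => B.1.max' (P.nonempty_of_mem_parts B.2))

lemma maxSet_card (P : Finpartition (Finset.univ : Finset (Fin n))) :
    (maxSet P).card = P.parts.card := by
  rw [maxSet, Finset.card_image_of_injective, Finset.card_attach]
  intro B B' h
  simp only at h
  apply Subtype.ext
  have hmem : (B : Finset (Fin n)).max' (P.nonempty_of_mem_parts B.2)
      ∈ (B' : Finset (Fin n)) := by
    rw [h]
    exact Finset.max'_mem _ _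
  exact P.eq_of_mem_parts B.2 B'.2 (Finset.max'_mem _ _) hmem

lemma mem_maxSet {P : Finpartition (Finset.univ : Finset (Fin n))} {x : Fin n} :
    x ∈ maxSet P ↔ ∃ B, ∃ hB : B ∈ P.parts, B.max' (P.nonempty_of_mem_parts hB) = x := by
  simp only [maxSet, Finset.mem_image, Finset.mem_attach, true_and, Subtype.exists]

/-- the increasing enumeration of the parts' maxima -/
noncomputable def sigmaP (P : Finpartition (Finset.univ : Finset (Fin n))) :
    Fin P.parts.card ↪o Fin n :=
  (maxSet P).orderEmbOfFin (maxSet_card P)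

lemma part_sigmaP_max' (P : Finpartition (Finset.univ : Finset (Fin n))) (m : Fin P.parts.card) :
    ∀ h, (P.part (sigmaP P m)).max' h = sigmaP P m := by
  intro h
  have hmem : sigmaP P m ∈ maxSet P := Finset.orderEmbOfFin_mem _ _ _
  obtain ⟨B, hB, hBmax⟩ := mem_maxSet.mp hmem
  have hpB : P.part (sigmaP P m) = B :=
    P.part_eq_of_mem hB (hBmax ▸ Finset.max'_mem _ _)
  calc (P.part (sigmaP P m)).max' h
      = B.max' (P.nonempty_of_mem_parts hB) := max'_congr' hpB h (P.nonempty_of_mem_parts hB)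
    _ = sigmaP P m := hBmax

/-- the inverse construction: an ordered finpartition from a finpartition -/
noncomputable def ofFP (P : Finpartition (Finset.univ : Finset (Fin n))) :
    OrderedFinpartition n where
  length := P.parts.card
  partSize m := (P.part (sigmaP P m)).card
  partSize_pos m := Finset.card_pos.2 ⟨sigmaP P m, P.mem_part (Finset.mem_univ _)⟩
  emb m := ⇑((P.part (sigmaP P m)).orderEmbOfFin rfl)
  emb_strictMono m := ((P.part (sigmaP P m)).orderEmbOfFin rfl).strictMono
  parts_strictMono := by
    have hlast : ∀ m : Fin P.parts.card,
        (P.part (sigmaP P m)).orderEmbOfFin rfl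
          ⟨(P.part (sigmaP P m)).card - 1,
            Nat.sub_one_lt_of_lt (Finset.card_pos.2 ⟨sigmaP P m, P.mem_part (Finset.mem_univ _)⟩)⟩
        = sigmaP P m := by
      intro m
      rw [Finset.orderEmbOfFin_last rfl
        (Finset.card_pos.2 ⟨sigmaP P m, P.mem_part (Finset.mem_univ _)⟩)]
      exact part_sigmaP_max' P m _
    intro a b hab
    simp only [hlast]
    exact (sigmaP P).strictMono hab
  disjoint := by
    intro a _ b _ hab
    have hr : ∀ m : Fin P.parts.card,
        Set.range ⇑((P.part (sigmaP P m)).orderEmbOfFin rfl) = ↑(P.part (sigmaP P m)) :=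
      fun m => Finset.range_orderEmbOfFin _ _
    show Disjoint (Set.range _) (Set.range _)
    rw [hr a, hr b]
    rw [Finset.disjoint_coe]
    have hne : P.part (sigmaP P a) ≠ P.part (sigmaP P b) := by
      intro hcon
      apply hab
      apply (sigmaP P).injective
      have h1 := part_sigmaP_max' P a ⟨sigmaP P a, P.mem_part (Finset.mem_univ _)⟩
      have h2 := part_sigmaP_max' P b ⟨sigmaP P b, P.mem_part (Finset.mem_univ _)⟩
      rw [← h1, ← h2]
      exact max'_congr' hcon _ _
    exact P.disjoint (P.part_mem.2 (Finset.mem_univ _)) (P.part_mem.2 (Finset.mem_univ _)) hne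
  cover := by
    intro x
    have hx : P.part x ∈ P.parts := P.part_mem.2 (Finset.mem_univ _)
    have hmax : (P.part x).max' (P.nonempty_of_mem_parts hx) ∈ maxSet P :=
      mem_maxSet.mpr ⟨P.part x, hx, rfl⟩
    have : ∃ m, sigmaP P m = (P.part x).max' (P.nonempty_of_mem_parts hx) := by
      have := Finset.range_orderEmbOfFin (maxSet P) (maxSet_card P)
      rw [← Finset.mem_coe, ← this] at hmax
      exact hmax
    obtain ⟨m, hm⟩ := this
    refine ⟨m, ?_⟩
    have hpm : P.part (sigmaP P m) = P.part x :=
      P.part_eq_of_mem hx (hm ▸ Finset.max'_mem _ _)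
    show x ∈ Set.range ⇑((P.part (sigmaP P m)).orderEmbOfFin rfl)
    rw [Finset.range_orderEmbOfFin, hpm]
    exact P.mem_part (Finset.mem_univ _)

lemma ofFP_length (P : Finpartition (Finset.univ : Finset (Fin n))) :
    (ofFP P).length = P.parts.card := rfl

lemma ofFP_img (P : Finpartition (Finset.univ : Finset (Fin n))) (m : Fin (ofFP P).length) :
    img (ofFP P) m = P.part (sigmaP P m) := by
  apply Finset.coe_injective
  rw [coe_img]
  show Set.range ⇑((P.part (sigmaP P m)).orderEmbOfFin rfl) = _
  rw [Finset.range_orderEmbOfFin]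

lemma toFP_ofFP (P : Finpartition (Finset.univ : Finset (Fin n))) : toFP (ofFP P) = P := by
  apply Finpartition.ext
  apply Finset.Subset.antisymm
  · intro B hB
    obtain ⟨m, hm⟩ := mem_toFP_parts.mp hB
    rw [← hm, ofFP_img]
    exact P.part_mem.2 (Finset.mem_univ _)
  · intro B hB
    have hmax : B.max' (P.nonempty_of_mem_parts hB) ∈ maxSet P :=
      mem_maxSet.mpr ⟨B, hB, rfl⟩
    have : ∃ m, sigmaP P m = B.max' (P.nonempty_of_mem_parts hB) := by
      have h := Finset.range_orderEmbOfFin (maxSet P) (maxSet_card P)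
      rw [← Finset.mem_coe, ← h] at hmax
      exact hmax
    obtain ⟨m, hm⟩ := this
    apply mem_toFP_parts.mpr
    refine ⟨m, ?_⟩
    refine (ofFP_img P m).trans ?_
    exact P.part_eq_of_mem hB (hm ▸ Finset.max'_mem _ _)

/-! ### transferring the sum -/

lemma sum_eqN (n l : ℕ) :
    ∑ P ∈ Finset.univ.filter
        (fun P : Finpartition (Finset.univ : Finset (Fin n)) => P.parts.card = l),
      ∏ B ∈ P.parts, Nat.factorial B.card = S n l := by
  classical
  rw [S, ← Finset.sum_filter]
  symm
  apply Finset.sum_bij (i := fun c _ => toFP c)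
  · intro c hc
    simp only [Finset.mem_filter, Finset.mem_univ, true_and] at hc ⊢
    rw [toFP_parts_card, hc]
  · intro c _ c' _ h
    exact toFP_injective h
  · intro P hP
    simp only [Finset.mem_filter, Finset.mem_univ, true_and] at hP
    refine ⟨ofFP P, ?_, toFP_ofFP P⟩
    simp only [Finset.mem_filter, Finset.mem_univ, true_and]
    rw [ofFP_length, hP]
  · intro c _
    exact (toFP_weight c).symm

end Stmt18Aux

open Stmt18Aux in
/-- for every real `c` and integer `i ≥ 1`,
`∑_{l=1}^i l! (-c)^{l-1} ∑_{π∈P(i,l)} ∏_{B∈π} |B|! = i! (1-c)^{i-1}`. -/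
theorem stmt_18 (c : ℝ) (i : ℕ) (hi : 1 ≤ i) :
    ∑ l ∈ Finset.Icc 1 i,
        ((Nat.factorial l : ℝ)) * (-c) ^ (l - 1) *
          ∑ P ∈ Finset.univ.filter
              (fun P : Finpartition (Finset.univ : Finset (Fin i)) => P.parts.card = l),
            ∏ B ∈ P.parts, (Nat.factorial B.card : ℝ) =
      (Nat.factorial i : ℝ) * (1 - c) ^ (i - 1) := by
  classical
  obtain ⟨m, rfl⟩ : ∃ m, i = m + 1 := ⟨i - 1, by omega⟩
  have hinner : ∀ l, (∑ P ∈ Finset.univ.filter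
      (fun P : Finpartition (Finset.univ : Finset (Fin (m + 1))) => P.parts.card = l),
      ∏ B ∈ P.parts, (Nat.factorial B.card : ℝ)) = ((S (m + 1) l : ℕ) : ℝ) := by
    intro l
    rw [← sum_eqN (m + 1) l]
    push_cast
    rfl
  have h1 : ∀ l ∈ Finset.Icc 1 (m + 1),
      ((Nat.factorial l : ℝ)) * (-c) ^ (l - 1) *
          (∑ P ∈ Finset.univ.filter
              (fun P : Finpartition (Finset.univ : Finset (Fin (m + 1))) => P.parts.card = l),
            ∏ B ∈ P.parts, (Nat.factorial B.card : ℝ))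
        = (Nat.factorial l : ℝ) * (-c) ^ (l - 1) * ((S (m + 1) l : ℕ) : ℝ) :=
    fun l _ => by rw [hinner]
  rw [Finset.sum_congr rfl h1, ← Finset.Ico_add_one_right_eq_Icc, Finset.sum_Ico_eq_sum_range]
  have hrange : m + 1 + 1 - 1 = m + 1 := by omega
  rw [hrange]
  have h2 : ∀ k ∈ Finset.range (m + 1),
      (Nat.factorial (1 + k) : ℝ) * (-c) ^ (1 + k - 1) * ((S (m + 1) (1 + k) : ℕ) : ℝ)
        = (Nat.factorial (m + 1) : ℝ) * ((-c) ^ k * (Nat.choose m k : ℝ)) := by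
    intro k _
    have hk := key m k
    have hk' : ((Nat.factorial (k + 1) : ℕ) : ℝ) * ((S (m + 1) (k + 1) : ℕ) : ℝ)
        = ((Nat.factorial (m + 1) : ℕ) : ℝ) * ((Nat.choose m k : ℕ) : ℝ) := by
      exact_mod_cast congrArg (fun x : ℕ => (x : ℝ)) hk
    rw [show 1 + k = k + 1 from by omega, show k + 1 - 1 = k from by omega]
    calc (Nat.factorial (k + 1) : ℝ) * (-c) ^ k * ((S (m + 1) (k + 1) : ℕ) : ℝ)
        = ((Nat.factorial (k + 1) : ℝ) * ((S (m + 1) (k + 1) : ℕ) : ℝ)) * (-c) ^ k := by ring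
      _ = ((Nat.factorial (m + 1) : ℝ) * (Nat.choose m k : ℝ)) * (-c) ^ k := by rw [hk']
      _ = _ := by ring
  rw [Finset.sum_congr rfl h2, ← Finset.mul_sum]
  have hm1 : m + 1 - 1 = m := by omega
  rw [hm1]
  congr 1
  have hbin : ((-c) + 1) ^ m
      = ∑ k ∈ Finset.range (m + 1), (-c) ^ k * 1 ^ (m - k) * ((Nat.choose m k : ℕ) : ℝ) :=
    add_pow (-c) 1 m
  rw [show (1 : ℝ) - c = (-c) + 1 from by ring, hbin]
  apply Finset.sum_congr rfl
  intro k _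
  simp
end
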